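/- arXiv:2208.08321 — 2 statements merged into one kernel-verified Lean document; each statement's English description precedes it below -/
import Mathlib

section
/- Geometric Lemma (Nash-type decomposition): Let d ≥ 2 and let K be a compact subset of the set S^{d×d}_+ of symmetric positive definite real d×d matrices. Then there exist a finite set Λ ⊂ ℤ^d \ {0} and smooth functions Γ_k : K → ℝ for k ∈ Λ such that for every R ∈ K one has R = Σ_{k∈Λ} Γ_k(R)² (e_k ⊗ e_k), where e_k := k/|k| is the unit vector in the direction of k. -/
noncomputable section

/-- Euclidean norm of an integer vector `k ∈ ℤ^d`. -/
def intVecNorm {d : ℕ} (k : Fin d → ℤ) : ℝ := Real.sqrt (∑ i, ((k i : ℝ)) ^ 2)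

/-- The unit vector `e_k = k/|k|` in the direction of `k ∈ ℤ^d`. -/
def unitVec {d : ℕ} (k : Fin d → ℤ) : Fin d → ℝ := fun i => (k i : ℝ) / intVecNorm k

lemma sq_sum_pos {d : ℕ} {k : Fin d → ℤ} (hk : k ≠ 0) : 0 < ∑ i, ((k i : ℝ)) ^ 2 := by
  obtain ⟨i, hi⟩ := Function.ne_iff.mp hk
  have hki : ((k i : ℝ)) ≠ 0 := by exact_mod_cast hi
  have : (0:ℝ) < ((k i : ℝ))^2 := by positivity
  exact lt_of_lt_of_le this (Finset.single_le_sum (f := fun i => ((k i:ℝ))^2)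
    (fun j _ => by positivity) (Finset.mem_univ i))

lemma unitVec_mul {d : ℕ} {k : Fin d → ℤ} (hk : k ≠ 0) (p q : Fin d) :
    unitVec k p * unitVec k q = ((k p : ℝ) * (k q : ℝ)) / (∑ i, ((k i : ℝ)) ^ 2) := by
  have h := sq_sum_pos hk
  unfold unitVec intVecNorm
  rw [div_mul_div_comm, Real.mul_self_sqrt h.le]

lemma unitVec_smul {d : ℕ} (n : ℕ) (hn : 0 < n) (k : Fin d → ℤ) :
    unitVec (fun i => (n:ℤ) * k i) = unitVec k := by
  funext p
  unfold unitVec intVecNorm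
  have hn' : (0:ℝ) < (n:ℝ) := by exact_mod_cast hn
  have h1 : ∑ i, (((n:ℤ) * k i : ℤ) : ℝ)^2 = (n:ℝ)^2 * ∑ i, ((k i:ℝ))^2 := by
    rw [Finset.mul_sum]; congr 1; funext i; push_cast; ring
  rw [h1, Real.sqrt_mul (by positivity), Real.sqrt_sq hn'.le]
  push_cast
  exact mul_div_mul_left _ _ (ne_of_gt hn')

def kd {d : ℕ} (a b : Fin d) : ℝ := if a = b then 1 else 0
def sg {d : ℕ} (i j : Fin d) : ℝ := if i < j then 1 else -1

lemma kd_self {d : ℕ} (a : Fin d) : kd a a = 1 := if_pos rfl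
lemma kd_ne {d : ℕ} {a b : Fin d} (h : a ≠ b) : kd a b = 0 := if_neg h
lemma sg_sq {d : ℕ} (i j : Fin d) : sg i j * sg i j = 1 := by unfold sg; split <;> norm_num
lemma sg_self {d : ℕ} (i : Fin d) : sg i i = -1 := by unfold sg; simp
lemma sg_anti {d : ℕ} {i j : Fin d} (h : i ≠ j) : sg i j + sg j i = 0 := by
  unfold sg
  rcases lt_or_gt_of_ne h with h1 | h1
  · rw [if_pos h1, if_neg (not_lt_of_gt h1)]; ring
  · rw [if_neg (not_lt_of_gt h1), if_pos h1]; ring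

lemma sum_kd {d : ℕ} (p : Fin d) (H : Fin d → ℝ) : ∑ i, kd p i * H i = H p := by
  rw [Finset.sum_eq_single p]
  · rw [kd_self, one_mul]
  · intro b _ hb; rw [kd_ne (Ne.symm hb), zero_mul]
  · intro h; exact absurd (Finset.mem_univ p) h

lemma key_sum (d : ℕ) (W : Fin d → Fin d → ℝ) (hW : ∀ i j, W i j = W j i) (θ : ℝ)
    (p q : Fin d) :
    ∑ i, ∑ j,
      (if i = j then (W i i - ((d:ℝ)-1)*θ*(∑ a, W a a)) * (kd p i * kd q i)
       else (θ*(∑ a, W a a) + sg i j * W i j) *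
            ((kd p i + sg i j * kd p j) * (kd q i + sg i j * kd q j) / 2))
      = W p q := by
  set T : ℝ := ∑ a, W a a with hT
  set c : Fin d → Fin d → ℝ := fun i j => (θ*T + sg i j * W i j)/2 with hc
  set off : Fin d → Fin d → ℝ := fun i j =>
    (θ*T + sg i j * W i j) * ((kd p i + sg i j * kd p j) * (kd q i + sg i j * kd q j) / 2)
    with hoff
  set Dg : Fin d → ℝ := fun i => W i i - ((d:ℝ)-1)*θ*T with hDg
  -- step 1 : rewrite summand
  have hsummand : ∀ i j : Fin d,
      (if i = j then Dg i * (kd p i * kd q i) else off i j)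
      = off i j + (if j = i then Dg i * (kd p i * kd q i) else 0) := by
    intro i j
    rcases eq_or_ne i j with rfl | hij
    · have hoffii : off i i = 0 := by
        simp only [hoff, sg_self]
        ring
      simp [hoffii]
    · rw [if_neg hij, if_neg (Ne.symm hij), add_zero]
  have step1 : (∑ i, ∑ j,
      (if i = j then (W i i - ((d:ℝ)-1)*θ*T) * (kd p i * kd q i)
       else (θ*T + sg i j * W i j) *
            ((kd p i + sg i j * kd p j) * (kd q i + sg i j * kd q j) / 2)))
      = (∑ i, ∑ j, off i j) + ∑ i, Dg i * (kd p i * kd q i) := by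
    rw [← Finset.sum_add_distrib]
    refine Finset.sum_congr rfl fun i _ => ?_
    have : ∀ j : Fin d, (if i = j then (W i i - ((d:ℝ)-1)*θ*T) * (kd p i * kd q i)
       else (θ*T + sg i j * W i j) *
            ((kd p i + sg i j * kd p j) * (kd q i + sg i j * kd q j) / 2)) =
        off i j + (if j = i then Dg i * (kd p i * kd q i) else 0) := fun j => hsummand i j
    rw [Finset.sum_congr rfl (fun j _ => this j), Finset.sum_add_distrib,
      Finset.sum_ite_eq' Finset.univ i (fun _ => Dg i * (kd p i * kd q i))]
    simp
  rw [step1]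
  -- expand off
  have hoffexp : ∀ i j : Fin d, off i j =
      kd p i * (kd q i * c i j) + kd p i * (kd q j * (c i j * sg i j))
      + kd q i * (kd p j * (c i j * sg i j)) + kd p j * (kd q j * c i j) := by
    intro i j
    have := sg_sq i j
    simp only [hoff, hc]
    linear_combination ((θ*T + sg i j * W i j)/2 * (kd p j * kd q j)) * this
  rw [Finset.sum_congr rfl (fun i _ => Finset.sum_congr rfl (fun j _ => hoffexp i j))]
  simp only [Finset.sum_add_distrib]
  have hS1 : ∑ i, ∑ j, kd p i * (kd q i * c i j) = kd q p * ∑ j, c p j := by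
    have h1 : ∀ i : Fin d, ∑ j, kd p i * (kd q i * c i j) = kd p i * (kd q i * ∑ j, c i j) := by
      intro i; rw [← Finset.mul_sum, ← Finset.mul_sum]
    rw [Finset.sum_congr rfl fun i _ => h1 i, sum_kd]
  have hS2 : ∑ i, ∑ j, kd p i * (kd q j * (c i j * sg i j)) = c p q * sg p q := by
    have h1 : ∀ i : Fin d, ∑ j, kd p i * (kd q j * (c i j * sg i j))
        = kd p i * (c i q * sg i q) := by
      intro i; rw [← Finset.mul_sum, sum_kd]
    rw [Finset.sum_congr rfl fun i _ => h1 i, sum_kd]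
  have hS3 : ∑ i, ∑ j, kd q i * (kd p j * (c i j * sg i j)) = c q p * sg q p := by
    have h1 : ∀ i : Fin d, ∑ j, kd q i * (kd p j * (c i j * sg i j))
        = kd q i * (c i p * sg i p) := by
      intro i; rw [← Finset.mul_sum, sum_kd]
    rw [Finset.sum_congr rfl fun i _ => h1 i, sum_kd]
  have hS4 : ∑ i, ∑ j, kd p j * (kd q j * c i j) = kd q p * ∑ i, c i p := by
    rw [Finset.sum_comm]
    have h1 : ∀ j : Fin d, ∑ i, kd p j * (kd q j * c i j) = kd p j * (kd q j * ∑ i, c i j) := by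
      intro j; rw [← Finset.mul_sum, ← Finset.mul_sum]
    rw [Finset.sum_congr rfl fun j _ => h1 j, sum_kd]
  have hD : ∑ i, Dg i * (kd p i * kd q i) = kd q p * Dg p := by
    have h1 : ∀ i : Fin d, Dg i * (kd p i * kd q i) = kd p i * (kd q i * Dg i) := fun i => by ring
    rw [Finset.sum_congr rfl fun i _ => h1 i, sum_kd]
  rw [hS1, hS2, hS3, hS4, hD]
  have hcc : (∑ j, c p j) + (∑ i, c i p) = (d:ℝ)*θ*T - W p p := by
    rw [← Finset.sum_add_distrib]
    have h1 : ∀ j : Fin d, c p j + c j p = θ*T + (if j = p then -(W p p) else 0) := by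
      intro j
      rcases eq_or_ne j p with rfl | hj
      · simp only [hc, sg_self, if_true, eq_self_iff_true]; ring
      · rw [if_neg hj, add_zero]
        simp only [hc]
        rw [hW j p]
        linear_combination (W p j / 2) * (sg_anti (Ne.symm hj))
    rw [Finset.sum_congr rfl fun j _ => h1 j, Finset.sum_add_distrib, Finset.sum_const,
      Finset.sum_ite_eq' Finset.univ p fun _ => -(W p p), if_pos (Finset.mem_univ p),
      Finset.card_univ, Fintype.card_fin]
    simp only [nsmul_eq_mul]; ring
  rcases eq_or_ne p q with rfl | hpq
  · rw [kd_self]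
    simp only [hc, hDg, sg_self]
    linear_combination hcc
  · rw [kd_ne (Ne.symm hpq)]
    simp only [hc, hDg]
    have h1 := sg_anti hpq
    have h2 := sg_sq p q
    have h3 := sg_sq q p
    have h4 := hW q p
    linear_combination (θ*T/2)*h1 + (W p q/2)*h2 + (W q p/2)*h3 + (1/2)*h4

lemma quad_smul (d : ℕ) (R : Fin d → Fin d → ℝ) (c : ℝ) (x : Fin d → ℝ) :
    ∑ i, ∑ j, (c * x i) * R i j * (c * x j) = c^2 * ∑ i, ∑ j, x i * R i j * x j := by
  rw [Finset.mul_sum]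
  refine Finset.sum_congr rfl fun i _ => ?_
  rw [Finset.mul_sum]
  exact Finset.sum_congr rfl fun j _ => by ring

lemma exists_lb (d : ℕ) (hd : 1 ≤ d) (R : Fin d → Fin d → ℝ)
    (hpos : ∀ x : Fin d → ℝ, x ≠ 0 → 0 < ∑ i, ∑ j, x i * R i j * x j) :
    ∃ ε : ℝ, 0 < ε ∧ ∀ x : Fin d → ℝ, ε * ∑ i, (x i)^2 ≤ ∑ i, ∑ j, x i * R i j * x j := by
  set S : Set (Fin d → ℝ) := {x | ∑ i, (x i)^2 = 1} with hS
  have hScomp : IsCompact S := by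
    have hclosed : IsClosed S := by
      have : S = (fun x : Fin d → ℝ => ∑ i, (x i)^2) ⁻¹' {1} := rfl
      rw [this]
      exact IsClosed.preimage (by continuity) isClosed_singleton
    have hbdd : S ⊆ Metric.closedBall 0 1 := by
      intro x hx
      simp only [Metric.mem_closedBall, dist_zero_right]
      rw [pi_norm_le_iff_of_nonneg (by norm_num)]
      intro i
      have h1 : (x i)^2 ≤ 1 := by
        rw [← hx]
        exact Finset.single_le_sum (f := fun i => (x i)^2) (fun j _ => sq_nonneg _) (Finset.mem_univ i)
      rw [Real.norm_eq_abs, abs_le]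
      constructor <;> nlinarith
    exact Metric.isCompact_of_isClosed_isBounded hclosed
      (Bornology.IsBounded.subset Metric.isBounded_closedBall hbdd)
  have hSne : S.Nonempty := by
    set i0 : Fin d := ⟨0, hd⟩ with hi0
    set x1 : Fin d → ℝ := Pi.single i0 (1:ℝ) with hx1
    refine ⟨x1, ?_⟩
    have h1 : ∀ i : Fin d, (x1 i)^2
        = if i = i0 then 1 else 0 := by
      intro i
      rcases eq_or_ne i i0 with rfl | hi
      · simp [hx1]
      · simp [hx1, Pi.single_apply, hi]
    simp only [hS, Set.mem_setOf_eq]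
    rw [Finset.sum_congr rfl fun i _ => h1 i, Finset.sum_ite_eq' Finset.univ _ (fun _ => (1:ℝ)),
      if_pos (Finset.mem_univ _)]
  have hf : Continuous (fun x : Fin d → ℝ => ∑ i, ∑ j, x i * R i j * x j) := by
    refine continuous_finset_sum _ fun i _ => continuous_finset_sum _ fun j _ => ?_
    exact ((continuous_apply i).mul continuous_const).mul (continuous_apply j)
  obtain ⟨x₀, hx₀S, hx₀min'⟩ := hScomp.exists_isMinOn hSne hf.continuousOn
  have hx₀min : ∀ y ∈ S, (∑ i, ∑ j, x₀ i * R i j * x₀ j) ≤ ∑ i, ∑ j, y i * R i j * y j :=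
    fun y hy => hx₀min' hy
  have hx₀ne : x₀ ≠ 0 := by
    intro h
    rw [hS] at hx₀S
    simp only [Set.mem_setOf_eq, h] at hx₀S
    simp at hx₀S
  refine ⟨_, hpos x₀ hx₀ne, fun x => ?_⟩
  rcases eq_or_ne x 0 with rfl | hx
  · simp
  · set n : ℝ := Real.sqrt (∑ i, (x i)^2) with hn
    have hsum : 0 < ∑ i, (x i)^2 := by
      obtain ⟨i, hi⟩ := Function.ne_iff.mp hx
      exact lt_of_lt_of_le (lt_of_le_of_ne (sq_nonneg _) (Ne.symm (pow_ne_zero 2 hi)))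
        (Finset.single_le_sum (f := fun i => (x i)^2) (fun j _ => sq_nonneg _) (Finset.mem_univ i))
    have hn0 : 0 < n := Real.sqrt_pos.mpr hsum
    have hn2 : n^2 = ∑ i, (x i)^2 := Real.sq_sqrt hsum.le
    have hyS : (fun i => n⁻¹ * x i) ∈ S := by
      simp only [hS, Set.mem_setOf_eq]
      have : ∀ i, (n⁻¹ * x i)^2 = n⁻¹^2 * (x i)^2 := fun i => by ring
      rw [Finset.sum_congr rfl fun i _ => this i, ← Finset.mul_sum, ← hn2]
      field_simp
    have hmin := hx₀min _ hyS
    have hquad := quad_smul d R n⁻¹ x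
    have : ∑ i, ∑ j, x i * R i j * x j = n^2 * ∑ i, ∑ j, (n⁻¹ * x i) * R i j * (n⁻¹ * x j) := by
      rw [hquad]
      field_simp
    rw [this, ← hn2]
    nlinarith [mul_le_mul_of_nonneg_right hmin (sq_nonneg n)]

lemma exists_sqrt_rows (d : ℕ) (P : Fin d → Fin d → ℝ)
    (hsymm : ∀ i j, P i j = P j i)
    (hpsd : ∀ x : Fin d → ℝ, 0 ≤ ∑ i, ∑ j, x i * P i j * x j) :
    ∃ B : Fin d → Fin d → ℝ, ∀ p q, P p q = ∑ l, B l p * B l q := by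
  classical
  set M : Matrix (Fin d) (Fin d) ℝ := Matrix.of P with hM
  have hherm : M.IsHermitian := by
    ext i j
    simpa [hM, Matrix.conjTranspose] using hsymm j i
  have hpsd' : M.PosSemidef := by
    refine Matrix.PosSemidef.of_dotProduct_mulVec_nonneg hherm (fun x => ?_)
    have h0 := hpsd x
    have heq : (dotProduct (star x) (M.mulVec x)) = ∑ i, ∑ j, x i * P i j * x j := by
      simp only [dotProduct, Matrix.mulVec, star_trivial]
      refine Finset.sum_congr rfl fun i _ => ?_
      rw [Finset.mul_sum]
      refine Finset.sum_congr rfl fun j _ => ?_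
      show x i * (M i j * x j) = x i * P i j * x j
      have : M i j = P i j := rfl
      rw [this]; ring
    rw [heq]; exact h0
  obtain ⟨B, hB⟩ : ∃ B : Matrix (Fin d) (Fin d) ℝ, M = star B * B := by
    open scoped MatrixOrder in exact CStarAlgebra.nonneg_iff_eq_star_mul_self.mp hpsd'.nonneg
  refine ⟨fun l i => B l i, fun p q => ?_⟩
  have h1 : M p q = (B.conjTranspose * B) p q := by rw [hB, Matrix.star_eq_conjTranspose]
  have h2 : (B.conjTranspose * B) p q = ∑ l, B l p * B l q := by
    rw [Matrix.mul_apply]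
    exact Finset.sum_congr rfl fun l _ => by
      rw [Matrix.conjTranspose_apply, star_trivial]
  have h3 : M p q = P p q := rfl
  rw [← h3, h1, h2]

lemma unit_single {d : ℕ} (i p q : Fin d) :
    unitVec (fun a => if a = i then (1:ℤ) else 0) p * unitVec (fun a => if a = i then (1:ℤ) else 0) q
    = kd p i * kd q i := by
  set v : Fin d → ℤ := fun a => if a = i then (1:ℤ) else 0 with hv
  have hcast : ∀ a : Fin d, ((v a : ℤ) : ℝ) = kd a i := by
    intro a
    by_cases h : a = i <;> simp [hv, kd, h]
  have hsq : ∀ a : Fin d, ((v a : ℝ))^2 = kd a i := by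
    intro a
    rw [hcast a]
    unfold kd; split <;> norm_num
  have hne : v ≠ 0 := by
    refine Function.ne_iff.mpr ⟨i, ?_⟩
    simp [hv]
  have hsum : ∑ a, ((v a : ℝ))^2 = 1 := by
    rw [Finset.sum_congr rfl fun a _ => hsq a]
    unfold kd
    rw [Finset.sum_ite_eq' Finset.univ i (fun _ => (1:ℝ)), if_pos (Finset.mem_univ i)]
  rw [unitVec_mul hne p q, hsum, hcast p, hcast q, div_one]

lemma unit_pair {d : ℕ} {i j : Fin d} (hij : i ≠ j) (p q : Fin d) :
    unitVec (fun a => (if a = i then (1:ℤ) else 0) + (if i < j then (1:ℤ) else -1) * (if a = j then 1 else 0)) p *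
    unitVec (fun a => (if a = i then (1:ℤ) else 0) + (if i < j then (1:ℤ) else -1) * (if a = j then 1 else 0)) q
    = (kd p i + sg i j * kd p j) * (kd q i + sg i j * kd q j) / 2 := by
  set v : Fin d → ℤ := fun a => (if a = i then (1:ℤ) else 0) + (if i < j then (1:ℤ) else -1) * (if a = j then 1 else 0) with hv
  have hvi : v i = 1 := by simp [hv, if_neg hij]
  have hne : v ≠ 0 := Function.ne_iff.mpr ⟨i, by rw [hvi]; exact one_ne_zero⟩
  have hcast : ∀ a : Fin d, ((v a : ℤ) : ℝ) = kd a i + sg i j * kd a j := by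
    intro a
    simp only [hv, kd, sg]
    push_cast [apply_ite (fun z : ℤ => (z : ℝ))]
    norm_num
  have hsq : ∀ a : Fin d, ((v a : ℝ))^2 = kd a i + kd a j := by
    intro a
    rw [hcast a]
    rcases eq_or_ne a i with rfl | ha
    · rw [kd_self, kd_ne (show a ≠ j from hij)]; ring
    · rcases eq_or_ne a j with rfl | ha'
      · rw [kd_self, kd_ne ha]
        have := sg_sq i a
        nlinarith [sg_sq i a]
      · rw [kd_ne ha, kd_ne ha']; ring
  have hsum : ∑ a, ((v a : ℝ))^2 = 2 := by
    rw [Finset.sum_congr rfl fun a _ => hsq a, Finset.sum_add_distrib]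
    have h1 : ∑ a : Fin d, kd a i = 1 := by
      unfold kd
      rw [Finset.sum_ite_eq' Finset.univ i (fun _ => (1:ℝ)), if_pos (Finset.mem_univ i)]
    have h2 : ∑ a : Fin d, kd a j = 1 := by
      unfold kd
      rw [Finset.sum_ite_eq' Finset.univ j (fun _ => (1:ℝ)), if_pos (Finset.mem_univ j)]
    rw [h1, h2]; norm_num
  rw [unitVec_mul hne p q, hsum, hcast p, hcast q]

set_option maxHeartbeats 2000000 in
lemma local_decomp (d : ℕ) (hd : 2 ≤ d) (R₀ : Fin d → Fin d → ℝ)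
    (hsymm : ∀ i j, R₀ i j = R₀ j i)
    (hpos : ∀ x : Fin d → ℝ, x ≠ 0 → 0 < ∑ i, ∑ j, x i * R₀ i j * x j) :
    ∃ (dir : ((Fin d × Fin d) ⊕ Fin d) → (Fin d → ℤ))
      (g : ((Fin d × Fin d) ⊕ Fin d) → (Fin d → Fin d → ℝ) → ℝ),
      (∀ t, dir t ≠ 0) ∧
      (∀ t, ContDiff ℝ (⊤:ℕ∞) (g t)) ∧
      (∀ t, (∃ c : ℝ, 0 ≤ c ∧ g t = fun _ => c) ∨ 0 < g t R₀) ∧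
      (∀ R : Fin d → Fin d → ℝ, (∀ i j, R i j = R j i) → ∀ p q,
        R p q = ∑ t, g t R * (unitVec (dir t) p * unitVec (dir t) q)) := by
  classical
  have hd1 : 1 ≤ d := le_trans one_le_two hd
  have hdR : (2:ℝ) ≤ (d:ℝ) := by exact_mod_cast hd
  have hd0 : (0:ℝ) < d := by linarith
  obtain ⟨ε, hε, hlb⟩ := exists_lb d hd1 R₀ hpos
  set P : Fin d → Fin d → ℝ := fun p q => R₀ p q - ε * (if p = q then 1 else 0) with hP
  have hPsymm : ∀ i j, P i j = P j i := by
    intro i j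
    simp only [hP]
    rw [hsymm i j]
    rcases eq_or_ne i j with rfl | h
    · rfl
    · rw [if_neg h, if_neg (Ne.symm h)]
  have hPpsd : ∀ x : Fin d → ℝ, 0 ≤ ∑ i, ∑ j, x i * P i j * x j := by
    intro x
    have h1 : ∑ i, ∑ j, x i * P i j * x j
        = (∑ i, ∑ j, x i * R₀ i j * x j) - ε * ∑ i, (x i)^2 := by
      have h2 : ∀ i j : Fin d, x i * P i j * x j
          = x i * R₀ i j * x j - ε * (if i = j then x i * x j else 0) := by
        intro i j
        simp only [hP]
        split_ifs <;> ring
      rw [Finset.sum_congr rfl fun i _ => Finset.sum_congr rfl fun j _ => h2 i j]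
      have h3 : ∀ i : Fin d, ∑ j, (x i * R₀ i j * x j - ε * (if i = j then x i * x j else 0))
          = (∑ j, x i * R₀ i j * x j) - ε * (x i)^2 := by
        intro i
        rw [Finset.sum_sub_distrib, ← Finset.mul_sum,
          Finset.sum_ite_eq Finset.univ i (fun j => x i * x j), if_pos (Finset.mem_univ i)]
        ring_nf
      rw [Finset.sum_congr rfl fun i _ => h3 i, Finset.sum_sub_distrib, ← Finset.mul_sum]
    rw [h1]
    have := hlb x
    linarith
  obtain ⟨B, hB⟩ := exists_sqrt_rows d P hPsymm hPpsd
  set C : ℝ := 1 + ∑ l, ∑ i, |B l i| with hC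
  have hCsum : (0:ℝ) ≤ ∑ l, ∑ i, |B l i| :=
    Finset.sum_nonneg fun l _ => Finset.sum_nonneg fun i _ => abs_nonneg _
  have hC1 : 1 ≤ C := by simp only [hC]; linarith
  have hBC : ∀ l i, |B l i| ≤ C := by
    intro l i
    have h1 : |B l i| ≤ ∑ i', |B l i'| :=
      Finset.single_le_sum (f := fun i' => |B l i'|) (fun j _ => abs_nonneg _) (Finset.mem_univ i)
    have h2 : ∑ i', |B l i'| ≤ ∑ l', ∑ i', |B l' i'| :=
      Finset.single_le_sum (f := fun l' => ∑ i', |B l' i'|)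
        (fun l' _ => Finset.sum_nonneg fun i' _ => abs_nonneg _) (Finset.mem_univ l)
    simp only [hC]; linarith
  have hCpos : (0:ℝ) < C + 1 := by linarith
  set δ : ℝ := min 1 (ε / (16*(d:ℝ)*(d:ℝ)*(C+1))) with hδ
  have hδpos : 0 < δ := lt_min one_pos (by positivity)
  have hδ1 : δ ≤ 1 := min_le_left _ _
  have hδ2 : δ ≤ ε / (16*(d:ℝ)*(d:ℝ)*(C+1)) := min_le_right _ _
  set Nn : ℕ := ⌈1/δ⌉₊ with hNn
  have hNpos : 0 < Nn := Nat.ceil_pos.mpr (by positivity)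
  have hNR : (0:ℝ) < (Nn:ℝ) := by exact_mod_cast hNpos
  have hNge : 1/δ ≤ (Nn:ℝ) := Nat.le_ceil _
  have hNinv : (1:ℝ)/(Nn:ℝ) ≤ δ := by
    rw [div_le_iff₀ hNR]
    rw [div_le_iff₀ hδpos] at hNge
    nlinarith
  set kk : Fin d → Fin d → ℤ := fun l i => round ((Nn:ℝ) * B l i) with hkk
  set r : Fin d → Fin d → ℝ := fun l i => ((kk l i : ℤ) : ℝ)/(Nn:ℝ) with hr
  have hrB : ∀ l i, |B l i - r l i| ≤ δ := by
    intro l i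
    have h1 : |(Nn:ℝ) * B l i - round ((Nn:ℝ) * B l i)| ≤ 1/2 := abs_sub_round _
    have h2 : B l i - r l i = ((Nn:ℝ) * B l i - ((round ((Nn:ℝ) * B l i) : ℤ):ℝ))/(Nn:ℝ) := by
      simp only [hr, hkk]
      field_simp
    rw [h2, abs_div, abs_of_pos hNR, div_le_iff₀ hNR]
    rw [div_le_iff₀ hNR] at hNinv
    nlinarith
  have hrC : ∀ l i, |r l i| ≤ C + 1 := by
    intro l i
    have h1 : r l i = B l i - (B l i - r l i) := by ring
    rw [h1]
    calc |B l i - (B l i - r l i)| ≤ |B l i| + |B l i - r l i| := abs_sub _ _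
      _ ≤ C + 1 := add_le_add (hBC l i) ((hrB l i).trans hδ1)
  set A : Fin d → Fin d → ℝ := fun p q => ∑ l, r l p * r l q with hA
  have hAsymm : ∀ p q, A p q = A q p := by
    intro p q
    exact Finset.sum_congr rfl fun l _ => by ring
  have hE : ∀ p q, |P p q - A p q| ≤ ε/(8*(d:ℝ)) := by
    intro p q
    have h1 : P p q - A p q = ∑ l, (B l p * B l q - r l p * r l q) := by
      rw [hB p q]
      simp only [hA]
      rw [← Finset.sum_sub_distrib]
    rw [h1]
    have h2 : ∀ l, |B l p * B l q - r l p * r l q| ≤ 2*(C+1)*δ := by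
      intro l
      have e1 : B l p * B l q - r l p * r l q
          = (B l p - r l p) * B l q + r l p * (B l q - r l q) := by ring
      rw [e1]
      calc |(B l p - r l p) * B l q + r l p * (B l q - r l q)|
          ≤ |(B l p - r l p) * B l q| + |r l p * (B l q - r l q)| := abs_add_le _ _
        _ = |B l p - r l p| * |B l q| + |r l p| * |B l q - r l q| := by rw [abs_mul, abs_mul]
        _ ≤ δ * C + (C+1) * δ := by
            apply add_le_add
            · exact mul_le_mul (hrB l p) (hBC l q) (abs_nonneg _) hδpos.le
            · exact mul_le_mul (hrC l p) (hrB l q) (abs_nonneg _) hCpos.le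
        _ ≤ 2*(C+1)*δ := by nlinarith
    calc |∑ l, (B l p * B l q - r l p * r l q)| ≤ ∑ l, |B l p * B l q - r l p * r l q| :=
        Finset.abs_sum_le_sum_abs _ _
      _ ≤ ∑ _l : Fin d, 2*(C+1)*δ := Finset.sum_le_sum fun l _ => h2 l
      _ = (d:ℝ) * (2*(C+1)*δ) := by rw [Finset.sum_const, Finset.card_univ, Fintype.card_fin, nsmul_eq_mul]
      _ ≤ ε/(8*(d:ℝ)) := by
          rw [le_div_iff₀ (by positivity : (0:ℝ) < 16*(d:ℝ)*(d:ℝ)*(C+1))] at hδ2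
          rw [le_div_iff₀ (by positivity : (0:ℝ) < 8*(d:ℝ))]
          nlinarith
  set θ : ℝ := 1/(2*(d:ℝ)^2) with hθ
  set i0 : Fin d := ⟨0, hd1⟩ with hi0
  set dir : ((Fin d × Fin d) ⊕ Fin d) → (Fin d → ℤ) := fun t => Sum.elim
    (fun ij : Fin d × Fin d => if ij.1 = ij.2 then (fun p => if p = ij.1 then (1:ℤ) else 0)
      else (fun p => (if p = ij.1 then (1:ℤ) else 0) +
        (if ij.1 < ij.2 then (1:ℤ) else -1) * (if p = ij.2 then 1 else 0)))
    (fun l : Fin d => if kk l = 0 then (fun p => if p = i0 then (1:ℤ) else 0) else kk l) t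
    with hdir
  set g : ((Fin d × Fin d) ⊕ Fin d) → (Fin d → Fin d → ℝ) → ℝ := fun t => Sum.elim
    (fun ij : Fin d × Fin d => if ij.1 = ij.2 then
        (fun R : Fin d → Fin d → ℝ =>
          (R ij.1 ij.1 - A ij.1 ij.1) - ((d:ℝ)-1)*θ*(∑ a, (R a a - A a a)))
      else (fun R : Fin d → Fin d → ℝ =>
          θ*(∑ a, (R a a - A a a)) + (sg ij.1 ij.2) * (R ij.1 ij.2 - A ij.1 ij.2)))
    (fun l : Fin d => fun _ => ∑ i, (r l i)^2) t with hg
  refine ⟨dir, g, ?_, ?_, ?_, ?_⟩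
  · -- directions nonzero
    rintro (⟨i, j⟩ | l)
    · rcases eq_or_ne i j with rfl | hij
      · simp only [hdir, Sum.elim_inl, if_pos rfl]
        exact Function.ne_iff.mpr ⟨i, by simp⟩
      · simp only [hdir, Sum.elim_inl, if_neg hij]
        refine Function.ne_iff.mpr ⟨i, ?_⟩
        simp [if_neg hij]
    · simp only [hdir, Sum.elim_inr]
      split_ifs with h
      · exact Function.ne_iff.mpr ⟨i0, by simp⟩
      · exact h
  · -- smoothness
    have hcoord : ∀ (a b : Fin d), ContDiff ℝ (⊤:ℕ∞) (fun R : Fin d → Fin d → ℝ => R a b) := by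
      intro a b
      have h1 : ContDiff ℝ (⊤:ℕ∞) (fun R : Fin d → Fin d → ℝ => R a) :=
        contDiff_pi.mp contDiff_id a
      exact contDiff_pi.mp h1 b
    have hTc : ContDiff ℝ (⊤:ℕ∞) (fun R : Fin d → Fin d → ℝ => ∑ a, (R a a - A a a)) :=
      ContDiff.sum fun a _ => (hcoord a a).sub contDiff_const
    rintro (⟨i, j⟩ | l)
    · rcases eq_or_ne i j with rfl | hij
      · simp only [hg, Sum.elim_inl, if_pos rfl]
        exact ((hcoord i i).sub contDiff_const).sub (contDiff_const.mul hTc)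
      · simp only [hg, Sum.elim_inl, if_neg hij]
        exact (contDiff_const.mul hTc).add (contDiff_const.mul ((hcoord i j).sub contDiff_const))
    · simp only [hg, Sum.elim_inr]
      exact contDiff_const
  · -- const-or-positive
    have hEd : ∀ a, |R₀ a a - A a a - ε| ≤ ε/(8*(d:ℝ)) := by
      intro a
      have h1 := hE a a
      have h2 : P a a - A a a = R₀ a a - A a a - ε := by
        simp only [hP]
        norm_num
        ring
      rwa [h2] at h1
    have hEod : ∀ a b, a ≠ b → |R₀ a b - A a b| ≤ ε/(8*(d:ℝ)) := by
      intro a b hab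
      have h1 := hE a b
      have h2 : P a b - A a b = R₀ a b - A a b := by
        simp only [hP, if_neg hab]
        ring
      rwa [h2] at h1
    have hTr : |(∑ a, (R₀ a a - A a a)) - (d:ℝ)*ε| ≤ ε/8 := by
      have h1 : ∑ a, (R₀ a a - A a a - ε) = (∑ a, (R₀ a a - A a a)) - (d:ℝ)*ε := by
        rw [Finset.sum_sub_distrib (f := fun a => R₀ a a - A a a) (g := fun _ => ε),
          Finset.sum_const, Finset.card_univ, Fintype.card_fin, nsmul_eq_mul]
      rw [← h1]
      calc |∑ a, (R₀ a a - A a a - ε)| ≤ ∑ a, |R₀ a a - A a a - ε| := Finset.abs_sum_le_sum_abs _ _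
        _ ≤ ∑ _a : Fin d, ε/(8*(d:ℝ)) := Finset.sum_le_sum fun a _ => hEd a
        _ = (d:ℝ) * (ε/(8*(d:ℝ))) := by
            rw [Finset.sum_const, Finset.card_univ, Fintype.card_fin, nsmul_eq_mul]
        _ = ε/8 := by field_simp
    rintro (⟨i, j⟩ | l)
    · right
      set T0 : ℝ := ∑ a, (R₀ a a - A a a) with hT0
      have hT0l : -(ε/8) ≤ T0 - (d:ℝ)*ε := neg_le_of_abs_le hTr
      have hT0u : T0 - (d:ℝ)*ε ≤ ε/8 := le_of_abs_le hTr
      rcases eq_or_ne i j with rfl | hij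
      · simp only [hg, Sum.elim_inl, if_pos rfl]
        have hu : |R₀ i i - A i i - ε| ≤ ε/(8*(d:ℝ)) := hEd i
        have hul : -(ε/(8*(d:ℝ))) ≤ R₀ i i - A i i - ε := neg_le_of_abs_le hu
        have h2d : (0:ℝ) < 2*(d:ℝ)^2 := by positivity
        have h8d : (0:ℝ) < 8*(d:ℝ) := by positivity
        have hulm : -ε ≤ 8*(d:ℝ)*(R₀ i i - A i i - ε) := by
          have hmul := mul_le_mul_of_nonneg_left hul (le_of_lt h8d)
          have hid : 8*(d:ℝ)*(-(ε/(8*(d:ℝ)))) = -ε := by field_simp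
          linarith
        have hkey : 0 < ((R₀ i i - A i i) - ((d:ℝ)-1)*θ*T0) * (2*(d:ℝ)^2) := by
          have hexp : ((R₀ i i - A i i) - ((d:ℝ)-1)*θ*T0) * (2*(d:ℝ)^2)
              = 2*(d:ℝ)^2*(R₀ i i - A i i) - ((d:ℝ)-1)*T0 := by
            simp only [hθ]
            field_simp
            try ring
          rw [hexp]
          nlinarith [mul_nonneg (show (0:ℝ) ≤ 8*(d:ℝ)*(R₀ i i - A i i - ε) + ε by linarith)
              (le_of_lt hd0),
            mul_nonneg (show (0:ℝ) ≤ ε - 8*(T0 - (d:ℝ)*ε) by linarith)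
              (show (0:ℝ) ≤ (d:ℝ)-1 by linarith),
            mul_pos hd0 hε, mul_pos (mul_pos hd0 hd0) hε,
            mul_nonneg (show (0:ℝ) ≤ (d:ℝ)-2 by linarith) hε.le]
        rcases mul_pos_iff.mp hkey with ⟨h1, _⟩ | ⟨_, h2⟩
        · exact h1
        · linarith
      · simp only [hg, Sum.elim_inl, if_neg hij]
        have hu : |R₀ i j - A i j| ≤ ε/(8*(d:ℝ)) := hEod i j hij
        have hsu : -(ε/(8*(d:ℝ))) ≤ sg i j * (R₀ i j - A i j) := by
          have h1 : |sg i j * (R₀ i j - A i j)| ≤ ε/(8*(d:ℝ)) := by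
            rw [abs_mul]
            have habs : |sg i j| = 1 := by unfold sg; split <;> simp
            rw [habs, one_mul]
            exact hu
          exact neg_le_of_abs_le h1
        have h2d : (0:ℝ) < 2*(d:ℝ)^2 := by positivity
        have h8d : (0:ℝ) < 8*(d:ℝ) := by positivity
        have hsum' : -ε ≤ 8*(d:ℝ)*(sg i j * (R₀ i j - A i j)) := by
          have hmul := mul_le_mul_of_nonneg_left hsu (le_of_lt h8d)
          have hid : 8*(d:ℝ)*(-(ε/(8*(d:ℝ)))) = -ε := by field_simp
          linarith
        have hkey : 0 < (θ*T0 + sg i j * (R₀ i j - A i j)) * (2*(d:ℝ)^2) := by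
          have hexp : (θ*T0 + sg i j * (R₀ i j - A i j)) * (2*(d:ℝ)^2)
              = T0 + (sg i j * (R₀ i j - A i j))*(2*(d:ℝ)^2) := by
            simp only [hθ]
            field_simp
            try ring
          rw [hexp]
          nlinarith [mul_nonneg
              (show (0:ℝ) ≤ 8*(d:ℝ)*(sg i j * (R₀ i j - A i j)) + ε by linarith)
              (le_of_lt hd0),
            mul_pos hd0 hε,
            mul_nonneg (show (0:ℝ) ≤ (d:ℝ)-2 by linarith) hε.le]
        rcases mul_pos_iff.mp hkey with ⟨h1, _⟩ | ⟨_, h2⟩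
        · exact h1
        · linarith
    · left
      exact ⟨∑ i, (r l i)^2, by positivity, by simp only [hg, Sum.elim_inr]⟩
  · -- decomposition
    intro R hR p q
    have hWsym : ∀ a b : Fin d, R a b - A a b = R b a - A b a := by
      intro a b
      rw [hR a b, hAsymm a b]
    rw [Fintype.sum_sum_type]
    have hinr : ∀ l : Fin d,
        g (Sum.inr l) R * (unitVec (dir (Sum.inr l)) p * unitVec (dir (Sum.inr l)) q)
        = r l p * r l q := by
      intro l
      simp only [hg, hdir, Sum.elim_inr]
      rcases eq_or_ne (kk l) 0 with h0 | h0
      · rw [if_pos h0]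
        have hrl : ∀ i, r l i = 0 := by
          intro i
          simp [hr, congrFun h0 i]
        have hz : ∑ i, (r l i)^2 = 0 := Finset.sum_eq_zero fun i _ => by rw [hrl i]; ring
        rw [hz, hrl p, hrl q]
        ring
      · rw [if_neg h0, unitVec_mul h0 p q]
        have hs : (0:ℝ) < ∑ i, ((kk l i:ℝ))^2 := sq_sum_pos h0
        have h1 : ∑ i, (r l i)^2 = (∑ i, ((kk l i:ℝ))^2)/(Nn:ℝ)^2 := by
          rw [Finset.sum_div]
          refine Finset.sum_congr rfl fun i _ => ?_
          simp only [hr]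
          rw [div_pow]
        rw [h1]
        simp only [hr]
        field_simp
        try ring
    have hinrsum : ∑ l, g (Sum.inr l) R *
        (unitVec (dir (Sum.inr l)) p * unitVec (dir (Sum.inr l)) q) = A p q := by
      rw [Finset.sum_congr rfl fun l _ => hinr l]
      try simp only [hA]
      try rfl
    have hinl : ∀ i j : Fin d,
        g (Sum.inl (i, j)) R * (unitVec (dir (Sum.inl (i, j))) p * unitVec (dir (Sum.inl (i, j))) q)
        = (if i = j then ((R i i - A i i) - ((d:ℝ)-1)*θ*(∑ a, (R a a - A a a))) * (kd p i * kd q i)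
           else (θ*(∑ a, (R a a - A a a)) + sg i j * (R i j - A i j)) *
                ((kd p i + sg i j * kd p j) * (kd q i + sg i j * kd q j) / 2)) := by
      intro i j
      rcases eq_or_ne i j with rfl | hij
      · simp only [hg, hdir, Sum.elim_inl, eq_self_iff_true, if_true]
        rw [unit_single i p q]
      · simp only [hg, hdir, Sum.elim_inl, if_neg hij]
        rw [unit_pair hij p q]
    have hinlsum : ∑ ij : Fin d × Fin d, g (Sum.inl ij) R *
        (unitVec (dir (Sum.inl ij)) p * unitVec (dir (Sum.inl ij)) q) = R p q - A p q := by
      rw [Fintype.sum_prod_type]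
      rw [Finset.sum_congr rfl fun i _ => Finset.sum_congr rfl fun j _ => hinl i j]
      exact key_sum d (fun a b => R a b - A a b) hWsym θ p q
    rw [hinlsum, hinrsum]
    ring

set_option maxHeartbeats 2000000 in
/-- **Geometric Lemma (Nash-type decomposition).**
Let `d ≥ 2` and `K` a compact set of symmetric positive definite `d×d` real matrices
(encoded as `Fin d → Fin d → ℝ`).  Then there exist a finite set `Λ ⊂ ℤ^d \ {0}` and
smooth functions `Γ_k : K → ℝ` such that every `R ∈ K` decomposes as
`R = ∑_{k ∈ Λ} Γ_k(R)² (e_k ⊗ e_k)`. -/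
theorem geometric_lemma (d : ℕ) (hd : 2 ≤ d)
    (K : Set (Fin d → Fin d → ℝ)) (hK : IsCompact K)
    (hsymm : ∀ R ∈ K, ∀ i j, R i j = R j i)
    (hpos : ∀ R ∈ K, ∀ x : Fin d → ℝ, x ≠ 0 → 0 < ∑ i, ∑ j, x i * R i j * x j) :
    ∃ (Λ : Finset (Fin d → ℤ)) (Γ : (Fin d → ℤ) → (Fin d → Fin d → ℝ) → ℝ),
      (0 : Fin d → ℤ) ∉ Λ ∧
      (∀ k ∈ Λ, ContDiffOn ℝ (⊤ : ℕ∞) (Γ k) K) ∧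
      (∀ R ∈ K, ∀ i j, R i j = ∑ k ∈ Λ, (Γ k R) ^ 2 * (unitVec k i * unitVec k j)) := by
  classical
  have hdR : (0:ℝ) < (d:ℝ) := by
    have : (2:ℝ) ≤ (d:ℝ) := by exact_mod_cast hd
    linarith
  have hloc := fun z : K => local_decomp d hd (z : Fin d → Fin d → ℝ)
    (hsymm _ z.2) (hpos _ z.2)
  choose dir g hdirne hgsm hgpos hgdec using hloc
  -- radii of positivity
  have hrad : ∀ z : K, ∃ ρ : ℝ, 0 < ρ ∧ ∀ R : Fin d → Fin d → ℝ,
      dist R (z : Fin d → Fin d → ℝ) < 2*ρ →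
      ∀ t, (∃ c : ℝ, 0 ≤ c ∧ g z t = fun _ => c) ∨ 0 < g z t R := by
    intro z
    set V : Set (Fin d → Fin d → ℝ) :=
      ⋂ t, {R | (∃ c : ℝ, 0 ≤ c ∧ g z t = fun _ => c) ∨ 0 < g z t R} with hV
    have hVopen : IsOpen V := by
      refine isOpen_iInter_of_finite fun t => ?_
      by_cases hc : ∃ c : ℝ, 0 ≤ c ∧ g z t = fun _ => c
      · have he : {R : Fin d → Fin d → ℝ |
            (∃ c : ℝ, 0 ≤ c ∧ g z t = fun _ => c) ∨ 0 < g z t R} = Set.univ :=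
          Set.eq_univ_of_forall fun R => Or.inl hc
        rw [he]; exact isOpen_univ
      · have he : {R : Fin d → Fin d → ℝ |
            (∃ c : ℝ, 0 ≤ c ∧ g z t = fun _ => c) ∨ 0 < g z t R}
            = {R | 0 < g z t R} := by
          ext R; simp [hc]
        rw [he]
        exact isOpen_lt continuous_const (hgsm z t).continuous
    have hzV : (z : Fin d → Fin d → ℝ) ∈ V := Set.mem_iInter.mpr fun t => hgpos z t
    obtain ⟨ρ, hρ, hball⟩ := Metric.isOpen_iff.mp hVopen _ hzV
    refine ⟨ρ/2, by linarith, fun R hRd t => ?_⟩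
    have : R ∈ V := hball (by rw [Metric.mem_ball]; linarith)
    exact Set.mem_iInter.mp this t
  choose rad hradpos hrad' using hrad
  -- finite subcover
  have hcov : K ⊆ ⋃ z : K, Metric.ball (z : Fin d → Fin d → ℝ) (rad z / d) := by
    intro R hR
    refine Set.mem_iUnion.mpr ⟨⟨R, hR⟩, ?_⟩
    rw [Metric.mem_ball, dist_self]
    exact div_pos (hradpos _) hdR
  obtain ⟨s, hs⟩ := hK.elim_finite_subcover _ (fun z : K => Metric.isOpen_ball) hcov
  -- bump functions
  set qq : K → (Fin d → Fin d → ℝ) → ℝ :=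
    fun z R => ∑ i, ∑ j, (R i j - (z : Fin d → Fin d → ℝ) i j)^2 with hqq
  set ψ : K → (Fin d → Fin d → ℝ) → ℝ := fun z R =>
    Real.smoothTransition ((2*(rad z)^2 - qq z R)/(rad z)^2) with hψ
  set σ : (Fin d → Fin d → ℝ) → ℝ := fun R => ∑ z ∈ s, (ψ z R)^2 with hσ
  have hcoord : ∀ (a b : Fin d), ContDiff ℝ (⊤:ℕ∞) (fun R : Fin d → Fin d → ℝ => R a b) := by
    intro a b
    exact contDiff_pi.mp (contDiff_pi.mp contDiff_id a) b
  have hqc : ∀ z : K, ContDiff ℝ (⊤:ℕ∞) (qq z) := by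
    intro z
    exact ContDiff.sum fun i _ => ContDiff.sum fun j _ =>
      ((hcoord i j).sub contDiff_const).pow 2
  have hψc : ∀ z : K, ContDiff ℝ (⊤:ℕ∞) (ψ z) := by
    intro z
    exact Real.smoothTransition.contDiff.comp
      ((contDiff_const.sub (hqc z)).div_const _)
  have hσc : ContDiff ℝ (⊤:ℕ∞) σ := ContDiff.sum fun z _ => (hψc z).pow 2
  have hqnn : ∀ (z : K) R, 0 ≤ qq z R :=
    fun z R => Finset.sum_nonneg fun i _ => Finset.sum_nonneg fun j _ => sq_nonneg _
  have hq_norm : ∀ (z : K) (R : Fin d → Fin d → ℝ),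
      ‖R - (z : Fin d → Fin d → ℝ)‖^2 ≤ qq z R := by
    intro z R
    have h1 : ‖R - (z : Fin d → Fin d → ℝ)‖ ≤ Real.sqrt (qq z R) := by
      rw [pi_norm_le_iff_of_nonneg (Real.sqrt_nonneg _)]
      intro i
      rw [pi_norm_le_iff_of_nonneg (Real.sqrt_nonneg _)]
      intro j
      rw [Real.norm_eq_abs]
      apply Real.abs_le_sqrt
      have h2 : (R - (z : Fin d → Fin d → ℝ)) i j = R i j - (z : Fin d → Fin d → ℝ) i j := rfl
      rw [h2]
      calc (R i j - (z : Fin d → Fin d → ℝ) i j)^2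
          ≤ ∑ j', (R i j' - (z : Fin d → Fin d → ℝ) i j')^2 :=
            Finset.single_le_sum (f := fun j' => (R i j' - (z : Fin d → Fin d → ℝ) i j')^2)
              (fun j' _ => sq_nonneg _) (Finset.mem_univ j)
        _ ≤ qq z R := Finset.single_le_sum
              (f := fun i' => ∑ j', (R i' j' - (z : Fin d → Fin d → ℝ) i' j')^2)
              (fun i' _ => Finset.sum_nonneg fun j' _ => sq_nonneg _) (Finset.mem_univ i)
    calc ‖R - (z : Fin d → Fin d → ℝ)‖^2 ≤ (Real.sqrt (qq z R))^2 :=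
        pow_le_pow_left₀ (norm_nonneg _) h1 2
      _ = qq z R := Real.sq_sqrt (hqnn z R)
  have hψ1 : ∀ (z : K) (R : Fin d → Fin d → ℝ),
      dist R (z : Fin d → Fin d → ℝ) < rad z / d → ψ z R = 1 := by
    intro z R hRd
    have hentry : ∀ i j : Fin d, (R i j - (z : Fin d → Fin d → ℝ) i j)^2 < (rad z / d)^2 := by
      intro i j
      have h1 : |R i j - (z : Fin d → Fin d → ℝ) i j| ≤ dist R (z : Fin d → Fin d → ℝ) := by
        rw [dist_eq_norm]
        have h2 : (R - (z : Fin d → Fin d → ℝ)) i j = R i j - (z : Fin d → Fin d → ℝ) i j := rfl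
        rw [← h2, ← Real.norm_eq_abs]
        exact (norm_le_pi_norm _ j).trans (norm_le_pi_norm _ i)
      have h3 : |R i j - (z : Fin d → Fin d → ℝ) i j| < rad z / d := lt_of_le_of_lt h1 hRd
      calc (R i j - (z : Fin d → Fin d → ℝ) i j)^2 = |R i j - (z : Fin d → Fin d → ℝ) i j|^2 :=
          (sq_abs _).symm
        _ < (rad z / d)^2 := by
            apply pow_lt_pow_left₀ h3 (abs_nonneg _)
            norm_num
    have hqlt : qq z R < (rad z)^2 := by
      have h4 : qq z R < ∑ _i : Fin d, ∑ _j : Fin d, (rad z / d)^2 := by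
        simp only [hqq]
        apply Finset.sum_lt_sum_of_nonempty (Finset.univ_nonempty_iff.mpr ⟨⟨0, by omega⟩⟩)
        intro i _
        apply Finset.sum_lt_sum_of_nonempty (Finset.univ_nonempty_iff.mpr ⟨⟨0, by omega⟩⟩)
        intro j _
        exact hentry i j
      have h5 : ∑ _i : Fin d, ∑ _j : Fin d, (rad z / d)^2 = (d:ℝ)^2 * (rad z / d)^2 := by
        rw [Finset.sum_const, Finset.sum_const, Finset.card_univ, Fintype.card_fin,
          nsmul_eq_mul, nsmul_eq_mul]
        ring
      have h6 : (d:ℝ)^2 * (rad z / d)^2 = (rad z)^2 := by field_simp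
      rw [h5, h6] at h4
      exact h4
    simp only [hψ]
    apply Real.smoothTransition.one_of_one_le
    rw [le_div_iff₀ (pow_pos (hradpos z) 2)]
    nlinarith [hqlt]
  have hψ0 : ∀ (z : K) (R : Fin d → Fin d → ℝ), 2*(rad z)^2 < qq z R → ψ z R = 0 := by
    intro z R h
    simp only [hψ]
    apply Real.smoothTransition.zero_of_nonpos
    apply div_nonpos_of_nonpos_of_nonneg
    · linarith
    · exact sq_nonneg _
  have hψsupp : ∀ (z : K) (R : Fin d → Fin d → ℝ), ψ z R ≠ 0 →
      dist R (z : Fin d → Fin d → ℝ) < 2 * rad z := by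
    intro z R h
    by_contra hout
    push_neg at hout
    apply h
    apply hψ0
    have h1 : (2 * rad z)^2 ≤ dist R (z : Fin d → Fin d → ℝ)^2 := by
      apply pow_le_pow_left₀ (by linarith [hradpos z] : (0:ℝ) ≤ 2 * rad z) hout
    have h2 : dist R (z : Fin d → Fin d → ℝ)^2 ≤ qq z R := by
      rw [dist_eq_norm]; exact hq_norm z R
    nlinarith [hradpos z]
  have hσ1 : ∀ R ∈ K, 1 ≤ σ R := by
    intro R hR
    obtain ⟨z, hz⟩ := Set.mem_iUnion₂.mp (hs hR)
    obtain ⟨hzs, hzb⟩ := hz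
    have h1 : ψ z R = 1 := hψ1 z R (Metric.mem_ball.mp hzb)
    calc (1:ℝ) = (ψ z R)^2 := by rw [h1]; norm_num
      _ ≤ σ R := Finset.single_le_sum (f := fun z' => (ψ z' R)^2)
          (fun z' _ => sq_nonneg _) hzs
  -- global index type
  set J := (↥s) × ((Fin d × Fin d) ⊕ Fin d) with hJ
  set D0 : J → (Fin d → ℤ) := fun jj => dir jj.1.1 jj.2 with hD0
  set enc : J → ℕ := fun jj => ((Fintype.equivFin J) jj : ℕ) with henc
  have hencinj : Function.Injective enc := by
    intro a b h
    exact (Fintype.equivFin J).injective (Fin.val_injective h)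
  set Nb : ℕ := 2 + Finset.univ.sup (fun jj : J => Finset.univ.sup
    (fun i : Fin d => (D0 jj i).natAbs)) with hNb
  have hNb2 : 2 ≤ Nb := Nat.le_add_right 2 _
  have hbound : ∀ (jj : J) (i : Fin d), (D0 jj i).natAbs + 2 ≤ Nb := by
    intro jj i
    have h1 : (D0 jj i).natAbs ≤ Finset.univ.sup (fun i : Fin d => (D0 jj i).natAbs) :=
      Finset.le_sup (f := fun i : Fin d => (D0 jj i).natAbs) (Finset.mem_univ i)
    have h2 : Finset.univ.sup (fun i : Fin d => (D0 jj i).natAbs)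
        ≤ Finset.univ.sup (fun jj : J => Finset.univ.sup
          (fun i : Fin d => (D0 jj i).natAbs)) :=
      Finset.le_sup (f := fun jj : J => Finset.univ.sup (fun i : Fin d => (D0 jj i).natAbs))
        (Finset.mem_univ jj)
    omega
  set Dir : J → (Fin d → ℤ) := fun jj => fun i => ((Nb:ℤ)^(enc jj + 1)) * D0 jj i with hDir
  have hD0ne : ∀ jj : J, D0 jj ≠ 0 := fun jj => hdirne _ _
  have hNbZ : (Nb:ℤ) ≠ 0 := by exact_mod_cast (by omega : Nb ≠ 0)
  have hDirne : ∀ jj : J, Dir jj ≠ 0 := by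
    intro jj
    obtain ⟨i, hi⟩ := Function.ne_iff.mp (hD0ne jj)
    refine Function.ne_iff.mpr ⟨i, ?_⟩
    simp only [hDir]
    exact mul_ne_zero (pow_ne_zero _ hNbZ) hi
  have hDirinj : Function.Injective Dir := by
    have key : ∀ a b : J, enc a ≤ enc b → Dir a = Dir b → a = b := by
      intro a b hab h
      have h' : ∀ i, (Nb:ℤ)^(enc a + 1) * D0 a i = (Nb:ℤ)^(enc b + 1) * D0 b i := by
        intro i
        have hfi := congrFun h i
        simpa only [hDir] using hfi
      rcases eq_or_ne (enc a) (enc b) with heq | hne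
      · exact hencinj heq
      · exfalso
        obtain ⟨i, hi⟩ := Function.ne_iff.mp (hD0ne a)
        have hfact : (Nb:ℤ)^(enc b + 1) = (Nb:ℤ)^(enc a + 1) * (Nb:ℤ)^(enc b - enc a) := by
          rw [← pow_add]
          congr 1
          omega
        have hNbne : (Nb:ℤ)^(enc a + 1) ≠ 0 := pow_ne_zero _ hNbZ
        have h2 : D0 a i = (Nb:ℤ)^(enc b - enc a) * D0 b i := by
          apply mul_left_cancel₀ hNbne
          rw [h' i, hfact]
          ring
        have hD0bi : D0 b i ≠ 0 := by
          intro h0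
          rw [h0, mul_zero] at h2
          exact hi h2
        have h3 : (D0 a i).natAbs = Nb^(enc b - enc a) * (D0 b i).natAbs := by
          rw [h2, Int.natAbs_mul, Int.natAbs_pow, Int.natAbs_natCast]
        have h4 : Nb ≤ Nb^(enc b - enc a) := by
          calc Nb = Nb^1 := (pow_one _).symm
            _ ≤ Nb^(enc b - enc a) := Nat.pow_le_pow_right (by omega) (by omega)
        have h5 : 1 ≤ (D0 b i).natAbs := Nat.one_le_iff_ne_zero.mpr (Int.natAbs_ne_zero.mpr hD0bi)
        have h6 := hbound a i
        have h7 : Nb ≤ (D0 a i).natAbs := by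
          rw [h3]
          calc Nb ≤ Nb^(enc b - enc a) := h4
            _ ≤ Nb^(enc b - enc a) * (D0 b i).natAbs := Nat.le_mul_of_pos_right _ (by omega)
        omega
    intro a b h
    rcases le_total (enc a) (enc b) with hab | hab
    · exact key a b hab h
    · exact (key b a hab h.symm).symm
  have hDirunit : ∀ jj : J, unitVec (Dir jj) = unitVec (D0 jj) := by
    intro jj
    have h1 : Dir jj = fun i => ((Nb^(enc jj + 1) : ℕ) : ℤ) * D0 jj i := by
      funext i
      simp only [hDir]
      push_cast
      ring
    rw [h1]
    exact unitVec_smul (Nb^(enc jj + 1)) (pow_pos (by omega) _) (D0 jj)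
  -- the final data
  set Λ : Finset (Fin d → ℤ) := Finset.image Dir Finset.univ with hΛ
  set F : J → (Fin d → Fin d → ℝ) → ℝ := fun jj => fun R =>
    ψ jj.1.1 R * Real.sqrt (g jj.1.1 jj.2 R) / Real.sqrt (σ R) with hF
  set Γ : (Fin d → ℤ) → (Fin d → Fin d → ℝ) → ℝ := fun k =>
    if h : ∃ jj : J, Dir jj = k then F h.choose else fun _ => 0 with hΓdef
  have hΓ : ∀ jj : J, Γ (Dir jj) = F jj := by
    intro jj
    have hex : ∃ jj' : J, Dir jj' = Dir jj := ⟨jj, rfl⟩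
    simp only [hΓdef, dif_pos hex]
    exact congrArg F (hDirinj hex.choose_spec)
  refine ⟨Λ, Γ, ?_, ?_, ?_⟩
  · -- 0 not in Λ
    intro h0
    obtain ⟨jj, _, hjj⟩ := Finset.mem_image.mp h0
    exact hDirne jj hjj
  · -- smoothness
    intro k hk
    obtain ⟨jj, _, rfl⟩ := Finset.mem_image.mp hk
    rw [hΓ jj]
    intro R hR
    apply ContDiffAt.contDiffWithinAt
    have hσR : 1 ≤ σ R := hσ1 R hR
    have hsqrtσ : ContDiffAt ℝ (⊤:ℕ∞) (fun R' => Real.sqrt (σ R')) R :=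
      (Real.contDiffAt_sqrt (by linarith : σ R ≠ 0)).comp R hσc.contDiffAt
    have hsqrtσne : Real.sqrt (σ R) ≠ 0 :=
      ne_of_gt (Real.sqrt_pos.mpr (by linarith))
    by_cases hconst : ∃ c : ℝ, 0 ≤ c ∧ g jj.1.1 jj.2 = fun _ => c
    · obtain ⟨c, hc0, hgc⟩ := hconst
      have hFc : F jj = fun R' => ψ jj.1.1 R' * Real.sqrt c / Real.sqrt (σ R') := by
        funext R'
        simp only [hF, hgc]
      rw [hFc]
      exact ((hψc jj.1.1).contDiffAt.mul contDiffAt_const).div hsqrtσ hsqrtσne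
    · have hposball : ∀ R' : Fin d → Fin d → ℝ,
          dist R' (jj.1.1 : Fin d → Fin d → ℝ) < 2 * rad jj.1.1 → 0 < g jj.1.1 jj.2 R' := by
        intro R' hR'
        rcases hrad' jj.1.1 R' hR' jj.2 with hc | hp
        · exact absurd hc hconst
        · exact hp
      rcases lt_or_ge (dist R (jj.1.1 : Fin d → Fin d → ℝ)) (2 * rad jj.1.1) with hin | hout
      · have hgpos' : 0 < g jj.1.1 jj.2 R := hposball R hin
        have hsqrtg : ContDiffAt ℝ (⊤:ℕ∞) (fun R' => Real.sqrt (g jj.1.1 jj.2 R')) R :=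
          (Real.contDiffAt_sqrt (ne_of_gt hgpos')).comp R (hgsm jj.1.1 jj.2).contDiffAt
        exact ((hψc jj.1.1).contDiffAt.mul hsqrtg).div hsqrtσ hsqrtσne
      · have hZopen : IsOpen {R' : Fin d → Fin d → ℝ | 2*(rad jj.1.1)^2 < qq jj.1.1 R'} :=
          isOpen_lt continuous_const (hqc jj.1.1).continuous
        have hRZ : R ∈ {R' : Fin d → Fin d → ℝ | 2*(rad jj.1.1)^2 < qq jj.1.1 R'} := by
          have h1 : (2*rad jj.1.1)^2 ≤ dist R (jj.1.1 : Fin d → Fin d → ℝ)^2 :=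
            pow_le_pow_left₀ (by linarith [hradpos jj.1.1]) hout 2
          have h2 : dist R (jj.1.1 : Fin d → Fin d → ℝ)^2 ≤ qq jj.1.1 R := by
            rw [dist_eq_norm]; exact hq_norm jj.1.1 R
          have h3 : 2*(rad jj.1.1)^2 < (2*rad jj.1.1)^2 := by nlinarith [hradpos jj.1.1]
          show 2*(rad jj.1.1)^2 < qq jj.1.1 R
          linarith
        have hev : F jj =ᶠ[nhds R] (fun _ => 0) := by
          filter_upwards [hZopen.mem_nhds hRZ] with R' hR'
          simp only [hF]
          rw [hψ0 jj.1.1 R' hR', zero_mul, zero_div]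
        exact (contDiffAt_const (c := (0:ℝ))).congr_of_eventuallyEq hev
  · -- decomposition
    intro R hR p q
    have hσR : 1 ≤ σ R := hσ1 R hR
    have hterm : ∀ jj : J, (Γ (Dir jj) R)^2 * (unitVec (Dir jj) p * unitVec (Dir jj) q)
        = ((ψ jj.1.1 R)^2 * g jj.1.1 jj.2 R / σ R) *
          (unitVec (D0 jj) p * unitVec (D0 jj) q) := by
      intro jj
      rw [hΓ jj, hDirunit jj]
      congr 1
      simp only [hF]
      rcases eq_or_ne (ψ jj.1.1 R) 0 with h0 | h0
      · rw [h0]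
        simp
      · have hin : dist R (jj.1.1 : Fin d → Fin d → ℝ) < 2 * rad jj.1.1 := hψsupp _ _ h0
        have hg0 : 0 ≤ g jj.1.1 jj.2 R := by
          rcases hrad' _ R hin jj.2 with ⟨c, hc0, hgc⟩ | hp
          · rw [hgc]
            exact hc0
          · exact hp.le
        have hσ0 : (0:ℝ) ≤ σ R := by linarith
        rw [div_pow, mul_pow, Real.sq_sqrt hg0, Real.sq_sqrt hσ0]
    have hstep1 : ∑ k ∈ Λ, (Γ k R)^2 * (unitVec k p * unitVec k q)
        = ∑ jj : J, (Γ (Dir jj) R)^2 * (unitVec (Dir jj) p * unitVec (Dir jj) q) := by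
      simp only [hΛ]
      exact Finset.sum_image (fun a _ b _ h => hDirinj h)
    have hstep2 : ∑ jj : J, (Γ (Dir jj) R)^2 * (unitVec (Dir jj) p * unitVec (Dir jj) q)
        = ∑ zz : ↥s, ∑ t : (Fin d × Fin d) ⊕ Fin d,
          ((ψ zz.1 R)^2 / σ R) * (g zz.1 t R *
            (unitVec (dir zz.1 t) p * unitVec (dir zz.1 t) q)) := by
      rw [Finset.sum_congr rfl fun jj _ => hterm jj, Fintype.sum_prod_type]
      refine Finset.sum_congr rfl fun zz _ => Finset.sum_congr rfl fun t _ => ?_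
      simp only [hD0]
      ring
    have hstep3 : ∀ zz : ↥s, ∑ t : (Fin d × Fin d) ⊕ Fin d,
        ((ψ zz.1 R)^2 / σ R) * (g zz.1 t R *
          (unitVec (dir zz.1 t) p * unitVec (dir zz.1 t) q))
        = ((ψ zz.1 R)^2 / σ R) * R p q := by
      intro zz
      rw [← Finset.mul_sum, ← hgdec zz.1 R (hsymm R hR) p q]
    have hstep4 : ∑ zz : ↥s, ((ψ zz.1 R)^2 / σ R) * R p q = R p q := by
      have h1 : ∑ zz : ↥s, ((ψ zz.1 R)^2 / σ R) * R p q
          = (∑ zz : ↥s, (ψ zz.1 R)^2) / σ R * R p q := by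
        rw [Finset.sum_div, Finset.sum_mul]
      have h2 : ∑ zz : ↥s, (ψ zz.1 R)^2 = σ R := by
        simp only [hσ]
        exact Finset.sum_coe_sort s (fun z' => (ψ z' R)^2)
      rw [h1, h2]
      field_simp
    rw [hstep1, hstep2, Finset.sum_congr rfl fun zz _ => hstep3 zz, hstep4]
end
end

section
/- Improved Hölder inequality on the torus: Let d ≥ 1 and 1 ≤ p ≤ ∞. There exists a constant C > 0, depending only on d and p, such that for all smooth functions a, f : 𝕋^d → ℝ and every σ ∈ ℕ, | ‖a · f(σ·)‖_{L^p(𝕋^d)} − ‖a‖_{L^p(𝕋^d)} ‖f‖_{L^p(𝕋^d)} | ≤ C σ^{−1/p} ‖a‖_{C¹} ‖f‖_{L^p(𝕋^d)}, where f(σ·) denotes the function x ↦ f(σx) on 𝕋^d. -/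
noncomputable section

open MeasureTheory ENNReal

/-- The unit cube in `ℝ^d`, a fundamental domain for the torus `𝕋^d = ℝ^d/ℤ^d`. -/
def cube (d : ℕ) : Set (Fin d → ℝ) := Set.Icc 0 1

/-- A function on `ℝ^d` is `ℤ^d`-periodic, i.e. descends to the torus `𝕋^d`. -/
def ZPeriodic {d : ℕ} {E : Type*} (f : (Fin d → ℝ) → E) : Prop :=
  ∀ (x : Fin d → ℝ) (k : Fin d → ℤ), f (fun i => x i + (k i : ℝ)) = f x

/-- The `C¹` norm `‖a‖_{C¹} = sup |a| + ∑ᵢ sup |∂ᵢ a|`. -/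
def C1Norm {d : ℕ} (a : (Fin d → ℝ) → ℝ) : ℝ :=
  (⨆ x, |a x|) + ∑ i, ⨆ x, |fderiv ℝ a x (Pi.single i 1)|

section Helpers

open Set

variable {d : ℕ}

def IntLat (d : ℕ) : AddSubgroup (Fin d → ℝ) :=
  (Submodule.span ℤ (Set.range (Pi.basisFun ℝ (Fin d)))).toAddSubgroup

def FD (d : ℕ) : Set (Fin d → ℝ) := ZSpan.fundamentalDomain (Pi.basisFun ℝ (Fin d))

lemma fd_fund : IsAddFundamentalDomain (IntLat d) (FD d) (volume : Measure (Fin d → ℝ)) :=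
  ZSpan.isAddFundamentalDomain' (Pi.basisFun ℝ (Fin d)) volume

lemma lat_coords {x : Fin d → ℝ} (h : x ∈ IntLat d) : ∃ k : Fin d → ℤ, ∀ i, x i = (k i : ℝ) := by
  have h' : x ∈ Submodule.span ℤ (Set.range (Pi.basisFun ℝ (Fin d))) := h
  rw [Module.Basis.mem_span_iff_repr_mem] at h'
  choose k hk using h'
  exact ⟨k, fun i => by have := hk i; rw [Pi.basisFun_repr] at this; simpa using this.symm⟩

lemma fd_fund_translate (c : Fin d → ℝ) :
    IsAddFundamentalDomain (IntLat d) ((· + c) ⁻¹' FD d) (volume : Measure (Fin d → ℝ)) := by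
  refine fd_fund.preimage_of_equiv
    (measurePreserving_add_right volume c).quasiMeasurePreserving
    (e := id) Function.bijective_id (fun g x => ?_)
  show (g +ᵥ x) + c = g +ᵥ (x + c)
  show (↑g + x) + c = ↑g + (x + c)
  rw [add_assoc]

lemma cube_ae_fd : (cube d : Set (Fin d → ℝ)) =ᵐ[volume] FD d := by
  have hFD : FD d = Set.pi Set.univ fun _ => Set.Ico (0:ℝ) 1 := by
    ext x; simp [FD, ZSpan.fundamentalDomain, Pi.basisFun_repr]
  have hc : (cube d : Set (Fin d → ℝ)) = Set.pi Set.univ fun _ => Set.Icc (0:ℝ) 1 := by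
    rw [cube, ← Set.pi_univ_Icc]; rfl
  rw [MeasureTheory.ae_eq_set]
  constructor
  · have hsub : (cube d) \ FD d ⊆ (Set.pi Set.univ fun _ => Set.Icc (0:ℝ) 1) \
        (Set.pi Set.univ fun _ => Set.Ico (0:ℝ) 1) := by rw [hFD, hc]
    refine measure_mono_null hsub ?_
    have h1 : volume (Set.pi Set.univ fun _ : Fin d => Set.Icc (0:ℝ) 1) = 1 := by
      rw [volume_pi_pi]; simp [Real.volume_Icc]
    have h2 : volume (Set.pi Set.univ fun _ : Fin d => Set.Ico (0:ℝ) 1) = 1 := by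
      rw [volume_pi_pi]; simp [Real.volume_Ico]
    have hsub2 : (Set.pi Set.univ fun _ : Fin d => Set.Ico (0:ℝ) 1) ⊆
        (Set.pi Set.univ fun _ => Set.Icc (0:ℝ) 1) :=
      fun x hx i hi => Set.Ico_subset_Icc_self (hx i hi)
    rw [measure_diff hsub2 ((MeasurableSet.univ_pi fun _ => measurableSet_Ico).nullMeasurableSet)
      (by rw [h2]; exact one_ne_top), h1, h2, tsub_self]
  · rw [hFD, hc]
    have : (Set.pi Set.univ fun _ : Fin d => Set.Ico (0:ℝ) 1) \ (Set.pi Set.univ fun _ => Set.Icc (0:ℝ) 1)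
        = ∅ := Set.diff_eq_empty.2 fun x hx i hi => Set.Ico_subset_Icc_self (hx i hi)
    rw [this]; exact measure_empty

lemma vadd_periodic {g : (Fin d → ℝ) → ℝ≥0∞}
    (hper : ∀ (x : Fin d → ℝ) (k : Fin d → ℤ), g (fun i => x i + (k i : ℝ)) = g x)
    (ℓ : IntLat d) (x : Fin d → ℝ) : g (ℓ +ᵥ x) = g x := by
  obtain ⟨k, hk⟩ := lat_coords ℓ.2
  have : (ℓ +ᵥ x) = fun i => x i + (k i : ℝ) := by
    funext i
    show (↑ℓ + x) i = x i + (k i : ℝ)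
    rw [Pi.add_apply, hk i, add_comm]
  rw [this, hper]

instance : Countable (IntLat d) := by
  refine Function.Injective.countable (f := fun (l : IntLat d) => (fun i => ⌊l.1 i⌋ : Fin d → ℤ)) ?_
  intro l m h
  obtain ⟨k, hk⟩ := lat_coords l.2
  obtain ⟨k', hk'⟩ := lat_coords m.2
  ext i
  have h1 : ⌊l.1 i⌋ = ⌊m.1 i⌋ := congrFun h i
  rw [hk i, hk' i] at h1 ⊢
  simpa using h1

lemma lintegral_cube_translate {g : (Fin d → ℝ) → ℝ≥0∞} (hg : Measurable g)
    (hper : ∀ (x : Fin d → ℝ) (k : Fin d → ℤ), g (fun i => x i + (k i : ℝ)) = g x)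
    (c : Fin d → ℝ) :
    ∫⁻ x in cube d, g (x + c) = ∫⁻ x in cube d, g x := by
  have hGper : ∀ (x : Fin d → ℝ) (k : Fin d → ℤ),
      (fun y => g (y + c)) (fun i => x i + (k i : ℝ)) = (fun y => g (y + c)) x := by
    intro x k
    show g ((fun i => x i + (k i : ℝ)) + c) = g (x + c)
    have : ((fun i => x i + (k i : ℝ)) + c) = fun i => (x + c) i + (k i : ℝ) := by
      funext i; simp [add_assoc, add_comm, add_left_comm]
    rw [this, hper]
  calc ∫⁻ x in cube d, g (x + c) = ∫⁻ x in FD d, g (x + c) :=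
        setLIntegral_congr cube_ae_fd
    _ = ∫⁻ x in (· + c) ⁻¹' FD d, g (x + c) :=
        fd_fund.setLIntegral_eq (fd_fund_translate c) (fun y => g (y + c))
          (fun ℓ x => vadd_periodic (g := fun y => g (y + c)) hGper ℓ x)
    _ = ∫⁻ x in FD d, g x :=
        (measurePreserving_add_right volume c).setLIntegral_comp_preimage
          (ZSpan.fundamentalDomain_measurableSet _) hg
    _ = ∫⁻ x in cube d, g x := (setLIntegral_congr cube_ae_fd).symm

lemma periodic_exists_box {E : Type*} {f : (Fin d → ℝ) → E} (hf : ZPeriodic f)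
    (x : Fin d → ℝ) : ∃ y, (∀ i, y i ∈ Set.Ico (0:ℝ) 1) ∧ f x = f y := by
  refine ⟨fun i => Int.fract (x i), fun i => ⟨Int.fract_nonneg _, Int.fract_lt_one _⟩, ?_⟩
  have := hf x (fun i => -⌊x i⌋)
  rw [← this]
  congr 1
  funext j
  rw [Int.fract]
  push_cast
  ring

lemma periodic_bound {f : (Fin d → ℝ) → ℝ} (hc : Continuous f) (hf : ZPeriodic f) :
    ∃ M : ℝ, 0 ≤ M ∧ ∀ x, |f x| ≤ M := by
  obtain ⟨C, hC⟩ := (isCompact_Icc : IsCompact (cube d)).exists_bound_of_continuousOn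
    hc.continuousOn
  refine ⟨max C 0, le_max_right _ _, fun x => ?_⟩
  obtain ⟨y, hy, hxy⟩ := periodic_exists_box hf x
  rw [hxy]
  have hyc : y ∈ cube d := Set.mem_Icc.2 ⟨fun i => (hy i).1, fun i => (hy i).2.le⟩
  exact le_trans (hC y hyc) (le_max_left _ _)

lemma periodic_bddAbove {f : (Fin d → ℝ) → ℝ} (hc : Continuous f) (hf : ZPeriodic f) :
    BddAbove (Set.range fun x => |f x|) := by
  obtain ⟨M, _, hM⟩ := periodic_bound hc hf
  exact ⟨M, fun y ⟨x, hx⟩ => hx ▸ hM x⟩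

lemma fderiv_periodic {a : (Fin d → ℝ) → ℝ} (ha : ContDiff ℝ (⊤ : ℕ∞) a)
    (hper : ZPeriodic a) : ZPeriodic (fderiv ℝ a) := by
  intro x k
  set v : Fin d → ℝ := fun i => (k i : ℝ) with hv
  have hax : ∀ y : Fin d → ℝ, a (y + v) = a y := fun y => hper y k
  have hD : HasFDerivAt (fun y : Fin d → ℝ => a (y + v)) (fderiv ℝ a (x + v)) x := by
    have h1 : HasFDerivAt (fun y : Fin d → ℝ => y + v)
        (ContinuousLinearMap.id ℝ (Fin d → ℝ)) x := (hasFDerivAt_id x).add_const v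
    have h2 := ((ha.differentiable (by simp)) (x + v)).hasFDerivAt
    exact h2.comp x h1
  have heq : (fun y : Fin d → ℝ => a (y + v)) = a := funext hax
  rw [heq] at hD
  have : fderiv ℝ a x = fderiv ℝ a (x + v) := hD.fderiv
  have hxv : (fun i => x i + (k i : ℝ)) = x + v := rfl
  rw [hxv, ← this]

lemma sum_sup_nonneg {a : (Fin d → ℝ) → ℝ} :
    0 ≤ ∑ i, ⨆ x, |fderiv ℝ a x (Pi.single i 1)| :=
  Finset.sum_nonneg fun i _ => Real.iSup_nonneg fun x => abs_nonneg _

lemma c1norm_pieces {a : (Fin d → ℝ) → ℝ} (ha : ContDiff ℝ (⊤ : ℕ∞) a) (hper : ZPeriodic a) :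
    (∀ x, |a x| ≤ ⨆ y, |a y|) ∧
    (∀ z, ‖fderiv ℝ a z‖ ≤ ∑ i, ⨆ x, |fderiv ℝ a x (Pi.single i 1)|) := by
  constructor
  · intro x
    exact le_ciSup (periodic_bddAbove ha.continuous hper) x
  · intro z
    refine ContinuousLinearMap.opNorm_le_bound _ sum_sup_nonneg fun v => ?_
    have hv : v = ∑ i, v i • (Pi.single i 1 : Fin d → ℝ) := by
      conv_lhs => rw [← Finset.univ_sum_single v]
      exact Finset.sum_congr rfl fun i _ => by rw [← Pi.single_smul, smul_eq_mul, mul_one]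
    have hLv : fderiv ℝ a z v = ∑ i, v i • fderiv ℝ a z (Pi.single i 1) := by
      conv_lhs => rw [hv]
      rw [map_sum]
      exact Finset.sum_congr rfl fun i _ => (fderiv ℝ a z).map_smul _ _
    calc ‖fderiv ℝ a z v‖ = ‖∑ i, v i • fderiv ℝ a z (Pi.single i 1)‖ := by rw [hLv]
    _ ≤ ∑ i, ‖v i • fderiv ℝ a z (Pi.single i 1)‖ := norm_sum_le _ _
    _ ≤ ∑ i, (⨆ x, |fderiv ℝ a x (Pi.single i 1)|) * ‖v‖ := by
        refine Finset.sum_le_sum fun i _ => ?_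
        rw [norm_smul]
        have h1 : ‖v i‖ ≤ ‖v‖ := norm_le_pi_norm v i
        have h2 : ‖fderiv ℝ a z (Pi.single i 1)‖ ≤ ⨆ x, |fderiv ℝ a x (Pi.single i 1)| := by
          have hbdd : BddAbove (Set.range fun x => |fderiv ℝ a x (Pi.single i 1)|) := by
            refine periodic_bddAbove ?_ ?_
            · exact (ContinuousLinearMap.apply ℝ ℝ (Pi.single i 1)).continuous.comp
                (ha.continuous_fderiv (by simp))
            · intro x k
              show (fderiv ℝ a (fun j => x j + (k j : ℝ))) (Pi.single i 1) = _
              rw [fderiv_periodic ha hper x k]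
          exact le_ciSup hbdd z
        calc ‖v i‖ * ‖fderiv ℝ a z (Pi.single i 1)‖
            ≤ ‖v‖ * (⨆ x, |fderiv ℝ a x (Pi.single i 1)|) :=
          mul_le_mul h1 h2 (norm_nonneg _) (norm_nonneg _)
        _ = _ := mul_comm _ _
    _ = (∑ i, ⨆ x, |fderiv ℝ a x (Pi.single i 1)|) * ‖v‖ := by rw [← Finset.sum_mul]

lemma lipschitz_bound {a : (Fin d → ℝ) → ℝ} (ha : ContDiff ℝ (⊤ : ℕ∞) a) (hper : ZPeriodic a)
    (x y : Fin d → ℝ) :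
    |a x - a y| ≤ (∑ i, ⨆ z, |fderiv ℝ a z (Pi.single i 1)|) * ‖x - y‖ := by
  have := Convex.norm_image_sub_le_of_norm_fderiv_le
    (f := a) (s := Set.univ) (fun z _ => (ha.differentiable (by simp)) z)
    (fun z _ => (c1norm_pieces ha hper).2 z) convex_univ (Set.mem_univ y) (Set.mem_univ x)
  simpa using this

lemma cube_volume : volume (cube d) = 1 := by
  rw [cube, ← Set.pi_univ_Icc, volume_pi_pi]
  simp [Real.volume_Icc]

instance : IsFiniteMeasure (volume.restrict (cube d)) := by
  constructor
  rw [Measure.restrict_apply_univ, cube_volume]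
  exact one_lt_top

lemma restrict_cube_univ : (volume.restrict (cube d)) Set.univ = 1 := by
  rw [Measure.restrict_apply_univ, cube_volume]

lemma tonelli_cube {φ ψ : (Fin d → ℝ) → ℝ≥0∞} (hφ : Measurable φ) (hψ : Measurable ψ)
    (hψper : ∀ (x : Fin d → ℝ) (k : Fin d → ℤ), ψ (fun i => x i + (k i : ℝ)) = ψ x)
    {w : (Fin d → ℝ) → (Fin d → ℝ)} (hw : Measurable w) :
    ∫⁻ h in cube d, ∫⁻ x in cube d, φ x * ψ (w x + h) =
      (∫⁻ x in cube d, φ x) * (∫⁻ x in cube d, ψ x) := by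
  have hinner : ∀ x : Fin d → ℝ, ∫⁻ h in cube d, φ x * ψ (w x + h)
      = φ x * ∫⁻ y in cube d, ψ y := by
    intro x
    rw [lintegral_const_mul _ (show Measurable fun h => ψ (w x + h) from
      hψ.comp (measurable_const_add (w x)))]
    congr 1
    have : (fun h => ψ (w x + h)) = fun h => ψ (h + w x) := by
      funext h; rw [add_comm]
    rw [this]
    exact lintegral_cube_translate hψ hψper (w x)
  rw [lintegral_lintegral_swap]
  · simp_rw [hinner]
    exact lintegral_mul_const _ hφ
  · exact ((hφ.comp measurable_snd).mul
      (hψ.comp ((hw.comp measurable_snd).add measurable_fst))).aemeasurable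

lemma le_essSup_cube (hd : 0 < d) {g : (Fin d → ℝ) → ℝ} (hc : Continuous g)
    (hper : ZPeriodic g) (x₀ : Fin d → ℝ) :
    ENNReal.ofReal |g x₀| ≤ eLpNormEssSup g (volume.restrict (cube d)) := by
  obtain ⟨y, hy, hgy⟩ := periodic_exists_box hper x₀
  rw [hgy]
  by_contra hlt
  push_neg at hlt
  set E := eLpNormEssSup g (volume.restrict (cube d)) with hE
  -- the set where |g| exceeds E is null in the cube
  have hnull : volume ({x | E < ENNReal.ofReal |g x|} ∩ cube d) = 0 := by
    have hae := ae_le_eLpNormEssSup (f := g) (μ := volume.restrict (cube d))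
    rw [ae_iff] at hae
    rw [Measure.restrict_apply₀'] at hae
    · convert hae using 3
      ext x
      simp only [Set.mem_setOf_eq, not_le, ← hE]
      rw [← ofReal_norm, Real.norm_eq_abs]
    · exact (measurableSet_Icc : MeasurableSet (cube d)).nullMeasurableSet
  -- the exceedance set is open
  have hVopen : IsOpen {x : Fin d → ℝ | E < ENNReal.ofReal |g x|} :=
    isOpen_lt continuous_const (ENNReal.continuous_ofReal.comp hc.abs)
  have hyV : y ∈ {x : Fin d → ℝ | E < ENNReal.ofReal |g x|} := hlt
  -- find a point of V inside the open unit box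
  obtain ⟨ε, hε, hball⟩ := Metric.isOpen_iff.1 hVopen y hyV
  have hne : (Finset.univ : Finset (Fin d)).Nonempty := by
    rw [Finset.univ_nonempty_iff]
    exact Fin.pos_iff_nonempty.1 hd
  set m := (Finset.univ.inf' hne fun i => 1 - y i) with hm
  have hmpos : 0 < m := by
    rw [hm]
    apply Finset.lt_inf'_iff hne (a := 0) |>.2
    intro i _
    have := (hy i).2
    linarith
  set t := min (ε / 2) (m / 2) with ht
  have htpos : 0 < t := lt_min (by linarith) (by linarith)
  set x₁ : Fin d → ℝ := fun i => y i + t with hx₁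
  have hx₁V : x₁ ∈ {x : Fin d → ℝ | E < ENNReal.ofReal |g x|} := by
    apply hball
    rw [Metric.mem_ball]
    have : x₁ - y = fun _ => t := by funext i; simp [hx₁]
    rw [dist_eq_norm, this]
    have hnorm : ‖(fun _ : Fin d => t)‖ = ‖t‖ := by
      haveI : Nonempty (Fin d) := Fin.pos_iff_nonempty.1 hd
      exact pi_norm_const t
    rw [hnorm, Real.norm_eq_abs, abs_of_pos htpos]
    calc t ≤ ε / 2 := min_le_left _ _
    _ < ε := by linarith
  have hx₁W : x₁ ∈ Set.pi Set.univ fun _ : Fin d => Set.Ioo (0:ℝ) 1 := by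
    intro i _
    constructor
    · have := (hy i).1; simp only [hx₁]; linarith
    · have h1 : m ≤ 1 - y i := Finset.inf'_le _ (Finset.mem_univ i)
      have h2 : t ≤ m / 2 := min_le_right _ _
      simp only [hx₁]
      linarith
  -- open positive-measure subset contradiction
  have hWopen : IsOpen (Set.pi Set.univ fun _ : Fin d => Set.Ioo (0:ℝ) 1) :=
    isOpen_set_pi Set.finite_univ fun _ _ => isOpen_Ioo
  have hpos : 0 < volume ({x : Fin d → ℝ | E < ENNReal.ofReal |g x|} ∩
      Set.pi Set.univ fun _ : Fin d => Set.Ioo (0:ℝ) 1) :=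
    (hVopen.inter hWopen).measure_pos volume ⟨x₁, hx₁V, hx₁W⟩
  have hsub : ({x : Fin d → ℝ | E < ENNReal.ofReal |g x|} ∩
      Set.pi Set.univ fun _ : Fin d => Set.Ioo (0:ℝ) 1) ⊆
      {x | E < ENNReal.ofReal |g x|} ∩ cube d := by
    refine Set.inter_subset_inter_right _ fun x hx => Set.mem_Icc.2 ?_
    exact ⟨fun i => (hx i (Set.mem_univ i)).1.le, fun i => (hx i (Set.mem_univ i)).2.le⟩
  have h0 : volume ({x : Fin d → ℝ | E < ENNReal.ofReal |g x|} ∩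
      Set.pi Set.univ fun _ : Fin d => Set.Ioo (0:ℝ) 1) = 0 :=
    measure_mono_null hsub hnull
  rw [h0] at hpos
  exact lt_irrefl _ hpos


lemma fsigma_periodic {f : (Fin d → ℝ) → ℝ} (hfper : ZPeriodic f) (σ : ℕ) :
    ZPeriodic (fun x => f ((σ : ℝ) • x)) := by
  intro x k
  have h1 : (σ : ℝ) • (fun i => x i + (k i : ℝ)) =
      fun i => ((σ : ℝ) • x) i + (((σ : ℤ) * k i : ℤ) : ℝ) := by
    funext i
    simp only [Pi.smul_apply, smul_eq_mul]
    push_cast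
    ring
  show f ((σ : ℝ) • fun i => x i + (k i : ℝ)) = f ((σ : ℝ) • x)
  rw [h1]
  exact hfper ((σ : ℝ) • x) (fun i => (σ : ℤ) * k i)

lemma main_top (hd : 0 < d) {a f : (Fin d → ℝ) → ℝ} (ha : ContDiff ℝ (⊤ : ℕ∞) a)
    (haper : ZPeriodic a) (hf : ContDiff ℝ (⊤ : ℕ∞) f) (hfper : ZPeriodic f) (σ : ℕ) :
    |(eLpNorm (fun x => a x * f ((σ : ℝ) • x)) ⊤ (volume.restrict (cube d))).toReal
        - (eLpNorm a ⊤ (volume.restrict (cube d))).toReal *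
          (eLpNorm f ⊤ (volume.restrict (cube d))).toReal|
      ≤ C1Norm a * (eLpNorm f ⊤ (volume.restrict (cube d))).toReal := by
  set μ := volume.restrict (cube d) with hμ
  set fσ : (Fin d → ℝ) → ℝ := fun x => f ((σ : ℝ) • x) with hfσ
  have hfσper : ZPeriodic fσ := fsigma_periodic hfper σ
  have hac := ha.continuous
  have hfc := hf.continuous
  have hfσc : Continuous fσ := hfc.comp (continuous_const_smul _)
  set Ma := ⨆ x, |a x| with hMaDef
  have hMa : ∀ x, |a x| ≤ Ma := fun x => le_ciSup (periodic_bddAbove hac haper) x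
  have hMa0 : 0 ≤ Ma := le_trans (abs_nonneg _) (hMa 0)
  set Mf := ⨆ x, |f x| with hMfDef
  have hMf : ∀ x, |f x| ≤ Mf := fun x => le_ciSup (periodic_bddAbove hfc hfper) x
  set F := eLpNorm f ⊤ μ with hF
  set A := eLpNorm a ⊤ μ with hA
  set N := eLpNorm (fun x => a x * fσ x) ⊤ μ with hN
  have hFbd : F ≤ ENNReal.ofReal Mf := by
    rw [hF, eLpNorm_exponent_top]
    exact eLpNormEssSup_le_of_ae_bound (Filter.Eventually.of_forall fun x => hMf x)
  have hFfin : F ≠ ∞ := (lt_of_le_of_lt hFbd ENNReal.ofReal_lt_top).ne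
  have hFσle : eLpNorm fσ ⊤ μ ≤ F := by
    rw [eLpNorm_exponent_top]
    have h1 : eLpNormEssSup fσ μ ≤ ENNReal.ofReal Mf :=
      eLpNormEssSup_le_of_ae_bound (Filter.Eventually.of_forall fun x => by
        simpa [hfσ, Real.norm_eq_abs] using hMf ((σ : ℝ) • x))
    have h2 : ENNReal.ofReal Mf ≤ F := by
      have hx : ∀ x, |f x| ≤ F.toReal := by
        intro x
        have := le_essSup_cube hd hfc hfper x
        rw [← eLpNorm_exponent_top, ← hμ, ← hF] at this
        exact (ENNReal.ofReal_le_iff_le_toReal hFfin).1 this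
      have hMfF : Mf ≤ F.toReal := Real.iSup_le hx ENNReal.toReal_nonneg
      calc ENNReal.ofReal Mf ≤ ENNReal.ofReal F.toReal := ENNReal.ofReal_le_ofReal hMfF
      _ = F := ENNReal.ofReal_toReal hFfin
    exact le_trans h1 h2
  have hNle : N ≤ ENNReal.ofReal Ma * F := by
    have h1 : N ≤ eLpNorm (Ma • fσ) ⊤ μ := by
      refine eLpNorm_mono fun x => ?_
      simp only [Real.norm_eq_abs, Pi.smul_apply, smul_eq_mul, abs_mul, abs_of_nonneg hMa0]
      exact mul_le_mul_of_nonneg_right (hMa x) (abs_nonneg _)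
    rw [eLpNorm_const_smul] at h1
    calc N ≤ ‖Ma‖₊ * eLpNorm fσ ⊤ μ := h1
    _ ≤ ENNReal.ofReal Ma * F := by
        rw [show (‖Ma‖₊ : ℝ≥0∞) = ENNReal.ofReal Ma from Real.enorm_eq_ofReal hMa0]
        exact mul_le_mul_right hFσle _
  have hAle : A ≤ ENNReal.ofReal Ma := by
    rw [hA, eLpNorm_exponent_top]
    exact eLpNormEssSup_le_of_ae_bound (Filter.Eventually.of_forall fun x => hMa x)
  have hBfin : ENNReal.ofReal Ma * F ≠ ∞ := ENNReal.mul_ne_top ENNReal.ofReal_ne_top hFfin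
  have hBtR : (ENNReal.ofReal Ma * F).toReal = Ma * F.toReal := by
    rw [ENNReal.toReal_mul, ENNReal.toReal_ofReal hMa0]
  have hNR : N.toReal ≤ Ma * F.toReal := hBtR ▸ ENNReal.toReal_mono hBfin hNle
  have hAFR : A.toReal * F.toReal ≤ Ma * F.toReal := by
    rw [← ENNReal.toReal_mul, ← hBtR]
    exact ENNReal.toReal_mono hBfin (mul_le_mul' hAle le_rfl)
  have habs : |N.toReal - A.toReal * F.toReal| ≤ Ma * F.toReal := by
    rw [abs_sub_le_iff]
    constructor
    · have : 0 ≤ A.toReal * F.toReal := mul_nonneg ENNReal.toReal_nonneg ENNReal.toReal_nonneg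
      linarith [hNR]
    · have : 0 ≤ N.toReal := ENNReal.toReal_nonneg
      linarith [hAFR]
  refine le_trans habs (mul_le_mul_of_nonneg_right ?_ ENNReal.toReal_nonneg)
  exact le_add_of_nonneg_right sum_sup_nonneg

lemma main_finite (hd : 0 < d) {p : ℝ≥0∞} (hp : 1 ≤ p) (hptop : p ≠ ∞)
    {a f : (Fin d → ℝ) → ℝ} (ha : ContDiff ℝ (⊤ : ℕ∞) a) (haper : ZPeriodic a)
    (hf : ContDiff ℝ (⊤ : ℕ∞) f) (hfper : ZPeriodic f) (σ : ℕ) (hσ : 0 < σ) :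
    |(eLpNorm (fun x => a x * f ((σ : ℝ) • x)) p (volume.restrict (cube d))).toReal
        - (eLpNorm a p (volume.restrict (cube d))).toReal *
          (eLpNorm f p (volume.restrict (cube d))).toReal|
      ≤ (σ : ℝ) ^ (-(1 / p.toReal)) * C1Norm a *
          (eLpNorm f p (volume.restrict (cube d))).toReal := by
  have hp0 : p ≠ 0 := (lt_of_lt_of_le zero_lt_one hp).ne'
  set r := p.toReal with hrdef
  have hrpos : 0 < r := ENNReal.toReal_pos hp0 hptop
  have hrne : r ≠ 0 := hrpos.ne'
  have hr1 : 1 ≤ r := by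
    have := ENNReal.toReal_mono hptop hp
    simpa using this
  have hσR : (1:ℝ) ≤ (σ : ℝ) := by exact_mod_cast hσ
  have hσne : ((σ:ℝ)) ≠ 0 := by positivity
  set μ := volume.restrict (cube d) with hμ
  set fσ : (Fin d → ℝ) → ℝ := fun x => f ((σ : ℝ) • x) with hfσdef
  have hfσper : ZPeriodic fσ := fsigma_periodic hfper σ
  have hac := ha.continuous
  have hfc := hf.continuous
  have hfσc : Continuous fσ := hfc.comp (continuous_const_smul _)
  -- bounds
  obtain ⟨Ma, hMa0, hMa⟩ := periodic_bound hac haper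
  obtain ⟨Mf, hMf0, hMf⟩ := periodic_bound hfc hfper
  set S := ∑ i, ⨆ z, |fderiv ℝ a z (Pi.single i 1)| with hSdef
  have hS0 : 0 ≤ S := sum_sup_nonneg
  -- ℝ≥0∞-valued integrands
  have hmeas : ∀ {g : (Fin d → ℝ) → ℝ}, Continuous g →
      Measurable fun y => (‖g y‖₊ : ℝ≥0∞) ^ r := fun hg =>
    (ENNReal.continuous_rpow_const.comp (ENNReal.continuous_coe.comp hg.nnnorm)).measurable
  set ga : (Fin d → ℝ) → ℝ≥0∞ := fun y => (‖a y‖₊ : ℝ≥0∞) ^ r with hgadef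
  set gf : (Fin d → ℝ) → ℝ≥0∞ := fun y => (‖f y‖₊ : ℝ≥0∞) ^ r with hgfdef
  set gfσ : (Fin d → ℝ) → ℝ≥0∞ := fun y => (‖fσ y‖₊ : ℝ≥0∞) ^ r with hgfσdef
  set gaf : (Fin d → ℝ) → ℝ≥0∞ := fun y => (‖a y * fσ y‖₊ : ℝ≥0∞) ^ r with hgafdef
  have mga : Measurable ga := hmeas hac
  have mgf : Measurable gf := hmeas hfc
  have mgfσ : Measurable gfσ := hmeas hfσc
  have mgaf : Measurable gaf := hmeas (hac.mul hfσc)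
  have hgfper : ∀ (x : Fin d → ℝ) (k : Fin d → ℤ), gf (fun i => x i + (k i : ℝ)) = gf x := by
    intro x k
    show (‖f (fun i => x i + (k i : ℝ))‖₊ : ℝ≥0∞) ^ r = _
    rw [hfper x k]
  have hgfσper : ∀ (x : Fin d → ℝ) (k : Fin d → ℤ), gfσ (fun i => x i + (k i : ℝ)) = gfσ x := by
    intro x k
    show (‖fσ (fun i => x i + (k i : ℝ))‖₊ : ℝ≥0∞) ^ r = _
    rw [hfσper x k]
  have hgafper : ∀ (x : Fin d → ℝ) (k : Fin d → ℤ), gaf (fun i => x i + (k i : ℝ)) = gaf x := by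
    intro x k
    show (‖a (fun i => x i + (k i : ℝ)) * fσ (fun i => x i + (k i : ℝ))‖₊ : ℝ≥0∞) ^ r = _
    rw [hfσper x k, haper x k]
  set Ia := ∫⁻ y in cube d, ga y with hIadef
  set If := ∫⁻ y in cube d, gf y with hIfdef
  set Ifσ := ∫⁻ y in cube d, gfσ y with hIfσdef
  -- eLpNorm formula
  have eL : ∀ g : (Fin d → ℝ) → ℝ,
      eLpNorm g p μ = (∫⁻ x in cube d, (‖g x‖₊ : ℝ≥0∞) ^ r) ^ (1 / r) := fun g =>
    eLpNorm_eq_lintegral_rpow_enorm_toReal hp0 hptop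
  -- scaling invariance: Ifσ = If
  have hconsth : ∀ h : Fin d → ℝ, ∫⁻ x in cube d, gf ((σ : ℝ) • x + h) = Ifσ := by
    intro h
    have hrw : (fun x => gf ((σ : ℝ) • x + h)) = fun x => gfσ (x + (σ : ℝ)⁻¹ • h) := by
      funext x
      show (‖f ((σ:ℝ) • x + h)‖₊ : ℝ≥0∞) ^ r = (‖f ((σ:ℝ) • (x + (σ:ℝ)⁻¹ • h))‖₊ : ℝ≥0∞) ^ r
      rw [smul_add, smul_inv_smul₀ hσne]
    rw [hrw]
    exact lintegral_cube_translate mgfσ hgfσper ((σ : ℝ)⁻¹ • h)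
  have hIfσeq : Ifσ = If := by
    have hw : Measurable fun x : Fin d → ℝ => (σ : ℝ) • x :=
      (continuous_const_smul ((σ:ℝ))).measurable
    have ht := tonelli_cube (φ := fun _ => (1:ℝ≥0∞)) measurable_const mgf hgfper hw
    simp only [one_mul] at ht
    rw [show (∫⁻ _ in cube d, (1:ℝ≥0∞)) = 1 by
        rw [setLIntegral_const, cube_volume, mul_one]] at ht
    rw [one_mul] at ht
    calc Ifσ = ∫⁻ _ in cube d, Ifσ := by
          rw [setLIntegral_const, cube_volume, mul_one]
    _ = ∫⁻ h in cube d, ∫⁻ x in cube d, gf ((σ : ℝ) • x + h) := by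
          refine lintegral_congr fun h => (hconsth h).symm
    _ = If := ht
  set F := eLpNorm f p μ with hFdef
  set A := eLpNorm a p μ with hAdef
  set N := eLpNorm (fun x => a x * fσ x) p μ with hNdef
  set D := ENNReal.ofReal (S * (σ : ℝ)⁻¹) * F with hDdef
  have hFI : F = If ^ (1 / r) := eL f
  have hAI : A = Ia ^ (1 / r) := eL a
  -- finiteness
  have hfin : ∀ {g : (Fin d → ℝ) → ℝ} (M : ℝ), (∀ x, |g x| ≤ M) → eLpNorm g p μ ≠ ∞ := by
    intro g M hg
    have hle := eLpNorm_le_of_ae_bound (μ := μ) (p := p) (f := g)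
      (Filter.Eventually.of_forall hg)
    rw [hμ, restrict_cube_univ, ENNReal.one_rpow, one_mul] at hle
    exact (lt_of_le_of_lt hle ENNReal.ofReal_lt_top).ne
  have hFfin : F ≠ ∞ := hfin Mf hMf
  have hAfin : A ≠ ∞ := hfin Ma hMa
  have hNfin : N ≠ ∞ := by
    refine hfin (Ma * Mf) fun x => ?_
    rw [abs_mul]
    exact mul_le_mul (hMa x) (hMf _) (abs_nonneg _) hMa0
  have hDfin : D ≠ ∞ := ENNReal.mul_ne_top ENNReal.ofReal_ne_top hFfin
  -- eLpNorm of translated fσ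
  have hFσc : ∀ c : Fin d → ℝ, eLpNorm (fun x => fσ (x + c)) p μ = F := by
    intro c
    rw [eL, hFI, ← hIfσeq]
    congr 1
    exact lintegral_cube_translate mgfσ hgfσper c
  -- key two-sided estimate for each h in the cube
  have key : ∀ h ∈ cube d,
      eLpNorm (fun x => a x * f ((σ : ℝ) • x + h)) p μ ≤ N + D ∧
      N ≤ eLpNorm (fun x => a x * f ((σ : ℝ) • x + h)) p μ + D := by
    intro h hh
    set c := (σ : ℝ)⁻¹ • h with hcdef
    have hσinv0 : (0:ℝ) ≤ (σ : ℝ)⁻¹ := by positivity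
    have hSσ0 : (0:ℝ) ≤ S * (σ : ℝ)⁻¹ := mul_nonneg hS0 hσinv0
    have hnc : ‖c‖ ≤ (σ : ℝ)⁻¹ := by
      rw [hcdef, norm_smul, Real.norm_eq_abs, abs_of_nonneg hσinv0]
      have hh1 : ‖h‖ ≤ 1 := by
        refine (pi_norm_le_iff_of_nonneg zero_le_one).2 fun i => ?_
        rw [Real.norm_eq_abs]
        have h0 : (0:ℝ) ≤ h i := by simpa using (Set.mem_Icc.1 hh).1 i
        have h1 : h i ≤ 1 := by simpa using (Set.mem_Icc.1 hh).2 i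
        exact abs_le.2 ⟨by linarith, h1⟩
      calc (σ : ℝ)⁻¹ * ‖h‖ ≤ (σ : ℝ)⁻¹ * 1 := mul_le_mul_of_nonneg_left hh1 hσinv0
      _ = (σ : ℝ)⁻¹ := mul_one _
    have hEh_eq : (fun x => a x * f ((σ : ℝ) • x + h)) = fun x => a x * fσ (x + c) := by
      funext x
      congr 1
      show f ((σ : ℝ) • x + h) = f ((σ : ℝ) • (x + c))
      rw [smul_add, hcdef, smul_inv_smul₀ hσne]
    have hT1 : eLpNorm (fun x => a (x + c) * fσ (x + c)) p μ = N := by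
      rw [eL, hNdef, eL]
      congr 1
      exact lintegral_cube_translate mgaf hgafper c
    have herr : ∀ b : (Fin d → ℝ) → ℝ, (∀ x, |b x| ≤ S * (σ : ℝ)⁻¹) →
        eLpNorm (fun x => b x * fσ (x + c)) p μ ≤ D := by
      intro b hbd
      have h1 : eLpNorm (fun x => b x * fσ (x + c)) p μ ≤
          eLpNorm ((S * (σ : ℝ)⁻¹) • fun x => fσ (x + c)) p μ := by
        refine eLpNorm_mono fun x => ?_
        simp only [Pi.smul_apply, smul_eq_mul, Real.norm_eq_abs, abs_mul,
          abs_of_nonneg hSσ0]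
        exact mul_le_mul_of_nonneg_right (hbd x) (abs_nonneg _)
      rw [eLpNorm_const_smul, hFσc c, Real.enorm_eq_ofReal hSσ0] at h1
      exact h1
    have hdiff1 : ∀ x, |a (x + c) - a x| ≤ S * (σ : ℝ)⁻¹ := by
      intro x
      have hl := lipschitz_bound ha haper (x + c) x
      rw [add_sub_cancel_left] at hl
      exact le_trans hl (mul_le_mul_of_nonneg_left hnc hS0)
    have hdiff2 : ∀ x, |a x - a (x + c)| ≤ S * (σ : ℝ)⁻¹ := fun x => by
      rw [abs_sub_comm]; exact hdiff1 x
    have hcont1 : Continuous fun x : Fin d → ℝ => a (x + c) :=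
      hac.comp (continuous_add_right c)
    have hcontfσc : Continuous fun x : Fin d → ℝ => fσ (x + c) :=
      hfσc.comp (continuous_add_right c)
    constructor
    · rw [hEh_eq]
      have hdec : (fun x => a x * fσ (x + c)) = (fun x => a (x + c) * fσ (x + c)) +
          fun x => (a x - a (x + c)) * fσ (x + c) := by
        funext x
        simp only [Pi.add_apply]
        ring
      rw [hdec]
      refine le_trans (eLpNorm_add_le ((hcont1.mul hcontfσc).aestronglyMeasurable)
        (((hac.sub hcont1).mul hcontfσc).aestronglyMeasurable) hp) ?_
      exact add_le_add hT1.le (herr _ hdiff2)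
    · have hdec2 : (fun x => a (x + c) * fσ (x + c)) = (fun x => a x * fσ (x + c)) +
          fun x => (a (x + c) - a x) * fσ (x + c) := by
        funext x
        simp only [Pi.add_apply]
        ring
      rw [hEh_eq]
      calc N = eLpNorm (fun x => a (x + c) * fσ (x + c)) p μ := hT1.symm
      _ ≤ _ := by
          rw [hdec2]
          refine le_trans (eLpNorm_add_le ((hac.mul hcontfσc).aestronglyMeasurable)
            (((hcont1.sub hac).mul hcontfσc).aestronglyMeasurable) hp) ?_
          exact add_le_add le_rfl (herr _ hdiff1)
  -- Tonelli and the averaged identity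
  have hw : Measurable fun x : Fin d → ℝ => (σ : ℝ) • x :=
    (continuous_const_smul ((σ:ℝ))).measurable
  set Φ : (Fin d → ℝ) → ℝ≥0∞ := fun h => ∫⁻ x in cube d, ga x * gf ((σ:ℝ) • x + h) with hΦdef
  have htone : ∫⁻ h in cube d, Φ h = Ia * If := tonelli_cube mga mgf hgfper hw
  have hΦeq : ∀ h, eLpNorm (fun x => a x * f ((σ:ℝ) • x + h)) p μ = Φ h ^ (1/r) := by
    intro h
    rw [eL]
    congr 1
    refine lintegral_congr fun x => ?_
    show (‖a x * f ((σ:ℝ) • x + h)‖₊ : ℝ≥0∞) ^ r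
      = (‖a x‖₊ : ℝ≥0∞) ^ r * (‖f ((σ:ℝ) • x + h)‖₊ : ℝ≥0∞) ^ r
    rw [nnnorm_mul, ENNReal.coe_mul, ENNReal.mul_rpow_of_nonneg _ _ hrpos.le]
  have hup : ∀ h ∈ cube d, Φ h ≤ (N + D) ^ r := by
    intro h hh
    have h1 := (key h hh).1
    rw [hΦeq h] at h1
    have h2 := ENNReal.rpow_le_rpow h1 hrpos.le
    rwa [one_div, ENNReal.rpow_inv_rpow hrne] at h2
  have hlow : ∀ h ∈ cube d, (N - D) ^ r ≤ Φ h := by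
    intro h hh
    have h2 := (key h hh).2
    rw [hΦeq h] at h2
    have h3 : N - D ≤ Φ h ^ (1/r) := tsub_le_iff_right.2 h2
    have h4 := ENNReal.rpow_le_rpow h3 hrpos.le
    rwa [one_div, ENNReal.rpow_inv_rpow hrne] at h4
  have hIup : Ia * If ≤ (N + D) ^ r := by
    rw [← htone]
    calc ∫⁻ h in cube d, Φ h ≤ ∫⁻ _ in cube d, (N + D) ^ r :=
          lintegral_mono_ae ((ae_restrict_iff' measurableSet_Icc).2
            (Filter.Eventually.of_forall hup))
    _ = (N + D) ^ r := by rw [setLIntegral_const, cube_volume, mul_one]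
  have hIlow : (N - D) ^ r ≤ Ia * If := by
    rw [← htone]
    calc (N - D) ^ r = ∫⁻ _ in cube d, (N - D) ^ r := by
          rw [setLIntegral_const, cube_volume, mul_one]
    _ ≤ ∫⁻ h in cube d, Φ h :=
          lintegral_mono_ae ((ae_restrict_iff' measurableSet_Icc).2
            (Filter.Eventually.of_forall hlow))
  have hAF : A * F = (Ia * If) ^ (1/r) := by
    rw [hAI, hFI, ENNReal.mul_rpow_of_nonneg _ _ (by positivity : (0:ℝ) ≤ 1/r)]
  have hle1 : A * F ≤ N + D := by
    rw [hAF, one_div]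
    have h5 := ENNReal.rpow_le_rpow hIup (by positivity : (0:ℝ) ≤ r⁻¹)
    rwa [ENNReal.rpow_rpow_inv hrne] at h5
  have hle2 : N - D ≤ A * F := by
    rw [hAF, one_div]
    have h5 := ENNReal.rpow_le_rpow hIlow (by positivity : (0:ℝ) ≤ r⁻¹)
    rwa [ENNReal.rpow_rpow_inv hrne] at h5
  have hle2' : N ≤ A * F + D := tsub_le_iff_right.1 hle2
  have hAFfin : A * F ≠ ∞ := ENNReal.mul_ne_top hAfin hFfin
  have hNR : N.toReal ≤ (A * F).toReal + D.toReal := by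
    rw [← ENNReal.toReal_add hAFfin hDfin]
    exact ENNReal.toReal_mono (ENNReal.add_ne_top.2 ⟨hAFfin, hDfin⟩) hle2'
  have hAFR : (A * F).toReal ≤ N.toReal + D.toReal := by
    rw [← ENNReal.toReal_add hNfin hDfin]
    exact ENNReal.toReal_mono (ENNReal.add_ne_top.2 ⟨hNfin, hDfin⟩) hle1
  have habs : |N.toReal - (A * F).toReal| ≤ D.toReal :=
    abs_sub_le_iff.2 ⟨by linarith, by linarith⟩
  have hDR : D.toReal = S * (σ:ℝ)⁻¹ * F.toReal := by
    rw [hDdef, ENNReal.toReal_mul, ENNReal.toReal_ofReal (mul_nonneg hS0 (by positivity))]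
  rw [ENNReal.toReal_mul] at habs
  have hfinal : S * (σ:ℝ)⁻¹ ≤ (σ:ℝ) ^ (-(1/r)) * C1Norm a := by
    have h1 : (σ:ℝ)⁻¹ ≤ (σ:ℝ) ^ (-(1/r)) := by
      rw [← Real.rpow_neg_one]
      refine Real.rpow_le_rpow_of_exponent_le hσR ?_
      have : 1/r ≤ 1 := (div_le_one hrpos).2 hr1
      linarith
    have h2 : S ≤ C1Norm a := le_add_of_nonneg_left (Real.iSup_nonneg fun x => abs_nonneg _)
    calc S * (σ:ℝ)⁻¹ ≤ C1Norm a * ((σ:ℝ) ^ (-(1/r))) :=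
          mul_le_mul h2 h1 (by positivity) (le_trans hS0 h2)
    _ = (σ:ℝ) ^ (-(1/r)) * C1Norm a := mul_comm _ _
  have hfinal2 : |N.toReal - A.toReal * F.toReal| ≤ (σ:ℝ) ^ (-(1/r)) * C1Norm a * F.toReal := by
    refine le_trans habs ?_
    rw [hDR]
    exact mul_le_mul_of_nonneg_right hfinal ENNReal.toReal_nonneg
  exact hfinal2

end Helpers

/-- **Improved Hölder inequality on the torus.**
For `d ≥ 1` and `1 ≤ p ≤ ∞` there is a constant `C = C(d,p) > 0` such that for all smooth
`a, f : 𝕋^d → ℝ` and every `σ ∈ ℕ`, `σ ≥ 1`,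
`| ‖a·f(σ·)‖_{L^p} − ‖a‖_{L^p} ‖f‖_{L^p} | ≤ C σ^{−1/p} ‖a‖_{C¹} ‖f‖_{L^p}`. -/
theorem improved_holder_torus (d : ℕ) (hd : 1 ≤ d) (p : ℝ≥0∞) (hp : 1 ≤ p) :
    ∃ C : ℝ, 0 < C ∧
      ∀ (a f : (Fin d → ℝ) → ℝ), ContDiff ℝ (⊤ : ℕ∞) a → ZPeriodic a →
        ContDiff ℝ (⊤ : ℕ∞) f → ZPeriodic f → ∀ σ : ℕ, 0 < σ →
        |(eLpNorm (fun x => a x * f ((σ : ℝ) • x)) p (volume.restrict (cube d))).toReal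
            - (eLpNorm a p (volume.restrict (cube d))).toReal *
              (eLpNorm f p (volume.restrict (cube d))).toReal|
          ≤ C * (σ : ℝ) ^ (-(1 / p.toReal)) * C1Norm a *
              (eLpNorm f p (volume.restrict (cube d))).toReal := by
  refine ⟨1, one_pos, fun a f ha haper hf hfper σ hσ => ?_⟩
  rcases eq_or_ne p ∞ with hptop | hptop
  · subst hptop
    have h0 : (∞ : ℝ≥0∞).toReal = 0 := ENNReal.toReal_top
    rw [h0]
    norm_num
    exact main_top hd ha haper hf hfper σ
  · have h := main_finite hd hp hptop ha haper hf hfper σ hσ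
    rw [one_mul]
    exact h
end
end
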